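/- arXiv:2408.08012 — 6 statements merged into one kernel-verified Lean document; each statement's English description precedes it below -/
import Mathlib

section
/- Let G be a group acting on a commutative ring Λ by ring automorphisms and semilinearly on a free Λ-module V, let R be a commutative ring and π : Λ → R a ring homomorphism, and let σ ∈ G satisfy π(σc) = π(c) for all c ∈ Λ. Then for any two finite bases u and v of V one has π(tr M^u(σ)) = π(tr M^v(σ)). (This is the content of Proposition 4.7 of the paper: the evaluations of the trace cocycle are independent of the choice of basis.) -/
/-- **Proposition 4.7**: Let `G` be a group acting on a commutative ring `Λ` by ring
automorphisms and semilinearly on a free `Λ`-module `V`, let `π : Λ →+* R` be a ring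
homomorphism to a commutative ring, and let `σ ∈ G` satisfy `π (σ • c) = π c` for all `c`.
Then for any two finite bases `u`, `v` of `V`, with cocycle matrices `Mu σ`, `Mv σ`, one has
`π (tr (Mu σ)) = π (tr (Mv σ))`: the evaluations of the trace cocycle are independent of the
choice of basis. -/
theorem adelicHGF.trace_eval_basis_independent {G Λ V R ι κ : Type*} [Group G] [CommRing Λ]
    [MulSemiringAction G Λ] [AddCommGroup V] [Module Λ V] [DistribMulAction G V]
    (hsemi : ∀ (σ : G) (c : Λ) (w : V), σ • (c • w) = (σ • c) • (σ • w))
    [CommRing R] (π : Λ →+* R)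
    [Fintype ι] [DecidableEq ι] [Fintype κ] [DecidableEq κ]
    (u : Module.Basis ι Λ V) (v : Module.Basis κ Λ V)
    (σ : G) (hσ : ∀ c : Λ, π (σ • c) = π c)
    (Mu : Matrix ι ι Λ) (Mv : Matrix κ κ Λ)
    (hMu : ∀ j : ι, σ • u j = ∑ i, Mu i j • u i)
    (hMv : ∀ j : κ, σ • v j = ∑ i, Mv i j • v i) :
    π Mu.trace = π Mv.trace := by
  classical
  set P : Matrix ι κ Λ := u.toMatrix v with hP
  set Q : Matrix κ ι Λ := v.toMatrix u with hQ
  have hPQ : P * Q = 1 := Module.Basis.toMatrix_mul_toMatrix_flip u v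
  have hQP : Q * P = 1 := Module.Basis.toMatrix_mul_toMatrix_flip v u
  -- the matrix σ • P
  set Pσ : Matrix ι κ Λ := fun i j => σ • P i j with hPσ
  -- key identity: Mu * Pσ = P * Mv
  have key : Mu * Pσ = P * Mv := by
    ext k j
    have h1 : σ • v j = ∑ i, Pσ i j • (σ • u i) := by
      have : v j = ∑ i, P i j • u i := by
        simpa [hP, Module.Basis.toMatrix] using (u.sum_repr (v j)).symm
      rw [this]
      rw [Finset.smul_sum]
      exact Finset.sum_congr rfl fun i _ => hsemi σ (P i j) (u i)
    have h2 : σ • v j = ∑ i, ∑ k, (Pσ i j * Mu k i) • u k := by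
      rw [h1]
      refine Finset.sum_congr rfl fun i _ => ?_
      rw [hMu i, Finset.smul_sum]
      exact Finset.sum_congr rfl fun k _ => by rw [smul_smul]
    have h3 : σ • v j = ∑ k, (Mu * Pσ) k j • u k := by
      rw [h2, Finset.sum_comm]
      refine Finset.sum_congr rfl fun k _ => ?_
      rw [← Finset.sum_smul]
      congr 1
      simp [Matrix.mul_apply, mul_comm]
    have h4 : σ • v j = ∑ k, (P * Mv) k j • u k := by
      rw [hMv j]
      have : ∀ l, Mv l j • v l = ∑ k, (P k l * Mv l j) • u k := by
        intro l
        have hv : v l = ∑ k, P k l • u k := by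
          simpa [hP, Module.Basis.toMatrix] using (u.sum_repr (v l)).symm
        rw [hv, Finset.smul_sum]
        exact Finset.sum_congr rfl fun k _ => by rw [smul_smul, mul_comm]
      rw [Finset.sum_congr rfl fun l _ => this l, Finset.sum_comm]
      refine Finset.sum_congr rfl fun k _ => ?_
      rw [← Finset.sum_smul]
      simp [Matrix.mul_apply]
    have := h3.symm.trans h4
    have hrepr := congrArg (fun w => u.repr w k) this
    simpa [map_sum, Finsupp.single_apply, Finset.sum_ite_eq'] using hrepr
  -- push through π
  let A := Mu.map π
  let B := Mv.map π
  let P' := P.map π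
  let Q' := Q.map π
  have hPσmap : Pσ.map π = P' := by
    ext i j; simp [Pσ, P', Matrix.map_apply, Matrix.map, hσ]
  have key' : A * P' = P' * B := by
    have := congrArg (Matrix.map · π) key
    simpa [Matrix.map_mul, hPσmap, A, B, P'] using this
  have hPQ' : P' * Q' = 1 := by
    have := congrArg (Matrix.map · π) hPQ
    simpa [Matrix.map_mul, P', Q'] using this
  have hQP' : Q' * P' = 1 := by
    have := congrArg (Matrix.map · π) hQP
    simpa [Matrix.map_mul, P', Q'] using this
  have htr : A.trace = B.trace := by
    calc A.trace = (A * (P' * Q')).trace := by rw [hPQ', Matrix.mul_one]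
    _ = ((A * P') * Q').trace := by rw [Matrix.mul_assoc]
    _ = ((P' * B) * Q').trace := by rw [key']
    _ = (Q' * (P' * B)).trace := (Matrix.trace_mul_comm _ _)
    _ = ((Q' * P') * B).trace := by rw [Matrix.mul_assoc]
    _ = B.trace := by rw [hQP', Matrix.one_mul]
  simpa [A, B, Matrix.trace, Matrix.diag, map_sum] using htr
end

section
/- Let τ : ℤ[Δ_N] → ℤ^{ℤ/Nℤ} × ℤ^{ℤ/Nℤ} be the ℤ-linear map sending ∑_{i,j} n_{i,j} ξ_N^i η_N^j to the pair of marginal sums ((∑_j n_{i,j})_{i∈ℤ/Nℤ}, (∑_i n_{i,j})_{j∈ℤ/Nℤ}). Then the kernel of τ equals the ideal of ℤ[Δ_N] generated by the element (1−ξ_N)(1−η_N). (Claim established in the proof of Theorem 2.5(i) of the paper.) -/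
/-- `Δ_N`: the multiplicative group `(ℤ/Nℤ) × (ℤ/Nℤ)`. -/
abbrev adelicHGF.Delta (N : ℕ) : Type := Multiplicative (ZMod N × ZMod N)

namespace adelicHGF

/-- The generator `ξ_N = (1,0)` of `Δ_N`. -/
def xi (N : ℕ) : Delta N := Multiplicative.ofAdd ((1 : ZMod N), (0 : ZMod N))

/-- The generator `η_N = (0,1)` of `Δ_N`. -/
def eta (N : ℕ) : Delta N := Multiplicative.ofAdd ((0 : ZMod N), (1 : ZMod N))

end adelicHGF

open adelicHGF

lemma adelicHGF.xi_pow_val (N : ℕ) [NeZero N] (i : ZMod N) :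
    xi N ^ i.val = Multiplicative.ofAdd (i, (0 : ZMod N)) := by
  rw [xi, ← ofAdd_nsmul]
  congr 1
  simp [Prod.ext_iff, nsmul_eq_mul, ZMod.natCast_val, ZMod.cast_id]

lemma adelicHGF.eta_pow_val (N : ℕ) [NeZero N] (j : ZMod N) :
    eta N ^ j.val = Multiplicative.ofAdd ((0 : ZMod N), j) := by
  rw [eta, ← ofAdd_nsmul]
  congr 1
  simp [Prod.ext_iff, nsmul_eq_mul, ZMod.natCast_val, ZMod.cast_id]

lemma adelicHGF.dvd_one_sub_xi (N : ℕ) [NeZero N] (i : ZMod N) :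
    (1 - MonoidAlgebra.of ℤ (Delta N) (xi N)) ∣
      (1 - MonoidAlgebra.of ℤ (Delta N) (Multiplicative.ofAdd (i, (0 : ZMod N)))) := by
  rw [← xi_pow_val N i, map_pow]
  exact one_sub_dvd_one_sub_pow _ _

lemma adelicHGF.dvd_one_sub_eta (N : ℕ) [NeZero N] (j : ZMod N) :
    (1 - MonoidAlgebra.of ℤ (Delta N) (eta N)) ∣
      (1 - MonoidAlgebra.of ℤ (Delta N) (Multiplicative.ofAdd ((0 : ZMod N), j))) := by
  rw [← eta_pow_val N j, map_pow]
  exact one_sub_dvd_one_sub_pow _ _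

lemma adelicHGF.key_mem (N : ℕ) [NeZero N] (p : ZMod N × ZMod N) :
    MonoidAlgebra.of ℤ (Delta N) (Multiplicative.ofAdd p)
      - MonoidAlgebra.of ℤ (Delta N) (Multiplicative.ofAdd (p.1, (0 : ZMod N)))
      - MonoidAlgebra.of ℤ (Delta N) (Multiplicative.ofAdd ((0 : ZMod N), p.2))
      + 1 ∈ Ideal.span {(1 - MonoidAlgebra.of ℤ (Delta N) (xi N)) *
        (1 - MonoidAlgebra.of ℤ (Delta N) (eta N))} := by
  have hmul : MonoidAlgebra.of ℤ (Delta N) (Multiplicative.ofAdd (p.1, (0 : ZMod N))) *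
      MonoidAlgebra.of ℤ (Delta N) (Multiplicative.ofAdd ((0 : ZMod N), p.2)) =
      MonoidAlgebra.of ℤ (Delta N) (Multiplicative.ofAdd p) := by
    rw [← map_mul]
    congr 1
    show Multiplicative.ofAdd ((p.1, (0:ZMod N)) + ((0:ZMod N), p.2)) = _
    simp
  have heq : MonoidAlgebra.of ℤ (Delta N) (Multiplicative.ofAdd p)
      - MonoidAlgebra.of ℤ (Delta N) (Multiplicative.ofAdd (p.1, (0 : ZMod N)))
      - MonoidAlgebra.of ℤ (Delta N) (Multiplicative.ofAdd ((0 : ZMod N), p.2))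
      + 1 =
      (1 - MonoidAlgebra.of ℤ (Delta N) (Multiplicative.ofAdd (p.1, (0 : ZMod N)))) *
      (1 - MonoidAlgebra.of ℤ (Delta N) (Multiplicative.ofAdd ((0 : ZMod N), p.2))) := by
    rw [← hmul]; ring
  rw [heq, Ideal.mem_span_singleton]
  exact mul_dvd_mul (dvd_one_sub_xi N p.1) (dvd_one_sub_eta N p.2)

lemma adelicHGF.mapDomain_apply_fintype {α β M : Type*} [Fintype α] [DecidableEq β]
    [AddCommMonoid M] (φ : α → β) (f : α →₀ M) (b : β) :
    Finsupp.mapDomain φ f b = ∑ a : α, if φ a = b then f a else 0 := by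
  classical
  rw [Finsupp.mapDomain, Finsupp.sum_apply, Finsupp.sum]
  simp only [Finsupp.single_apply]
  exact Finset.sum_subset (Finset.subset_univ _)
    (fun a _ ha => by simp [Finsupp.notMem_support_iff.mp ha])

open adelicHGF in
/-- **Claim in the proof of Theorem 2.5(i)**: let `τ : ℤ[Δ_N] → ℤ^{ℤ/Nℤ} × ℤ^{ℤ/Nℤ}` be the
`ℤ`-linear map sending `∑_{i,j} n_{i,j} ξ_N^i η_N^j` to the pair of marginal sums
`((∑_j n_{i,j})_i, (∑_i n_{i,j})_j)`.  Then the kernel of `τ` equals the ideal of `ℤ[Δ_N]`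
generated by `(1 - ξ_N)(1 - η_N)`.  (An element `f` of the group ring is in the kernel iff all
of its marginal sums vanish.) -/
theorem adelicHGF.ker_marginal_eq_span (N : ℕ) [NeZero N] (f : MonoidAlgebra ℤ (Delta N)) :
    ((∀ i : ZMod N, ∑ j : ZMod N, f.coeff (Multiplicative.ofAdd (i, j)) = 0) ∧
      (∀ j : ZMod N, ∑ i : ZMod N, f.coeff (Multiplicative.ofAdd (i, j)) = 0)) ↔
    f ∈ Ideal.span {(1 - MonoidAlgebra.of ℤ (Delta N) (xi N)) *
        (1 - MonoidAlgebra.of ℤ (Delta N) (eta N))} := by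
  classical
  set I : Ideal (MonoidAlgebra ℤ (Delta N)) :=
    Ideal.span {(1 - MonoidAlgebra.of ℤ (Delta N) (xi N)) *
        (1 - MonoidAlgebra.of ℤ (Delta N) (eta N))} with hI
  constructor
  · rintro ⟨h1, h2⟩
    set c : ZMod N × ZMod N → ℤ := fun p => f.coeff (Multiplicative.ofAdd p) with hc
    have hf : f = ∑ p : ZMod N × ZMod N,
        c p • MonoidAlgebra.of ℤ (Delta N) (Multiplicative.ofAdd p) := by
      have h0 : f = ∑ g : Delta N, MonoidAlgebra.single g (f.coeff g) := by
        apply MonoidAlgebra.coeff_injective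
        rw [MonoidAlgebra.coeff_sum]
        exact (Finsupp.univ_sum_single f.coeff).symm
      rw [h0]
      rw [← (Fintype.sum_equiv Multiplicative.ofAdd _
        (fun g => MonoidAlgebra.single g (f.coeff g)) (fun p => rfl))]
      refine Finset.sum_congr rfl fun p _ => ?_
      rw [MonoidAlgebra.of_apply, MonoidAlgebra.smul_single', mul_one]
    have hsplit : f = (∑ p : ZMod N × ZMod N, c p •
        (MonoidAlgebra.of ℤ (Delta N) (Multiplicative.ofAdd p)
          - MonoidAlgebra.of ℤ (Delta N) (Multiplicative.ofAdd (p.1, (0 : ZMod N)))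
          - MonoidAlgebra.of ℤ (Delta N) (Multiplicative.ofAdd ((0 : ZMod N), p.2)) + 1))
        + ((∑ p : ZMod N × ZMod N, c p •
            MonoidAlgebra.of ℤ (Delta N) (Multiplicative.ofAdd (p.1, (0 : ZMod N))))
          + (∑ p : ZMod N × ZMod N, c p •
            MonoidAlgebra.of ℤ (Delta N) (Multiplicative.ofAdd ((0 : ZMod N), p.2)))
          - (∑ p : ZMod N × ZMod N, c p) • (1 : MonoidAlgebra ℤ (Delta N))) := by
      rw [Finset.sum_smul]
      rw [← Finset.sum_add_distrib, ← Finset.sum_sub_distrib, ← Finset.sum_add_distrib]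
      rw [hf]
      refine Finset.sum_congr rfl fun p _ => ?_
      simp only [smul_sub, smul_add]
      abel
    have hz1 : (∑ p : ZMod N × ZMod N, c p •
        MonoidAlgebra.of ℤ (Delta N) (Multiplicative.ofAdd (p.1, (0 : ZMod N)))) = 0 := by
      rw [Fintype.sum_prod_type]
      refine Finset.sum_eq_zero fun i _ => ?_
      have hrw : (∑ j : ZMod N, c (i, j) • MonoidAlgebra.of ℤ (Delta N)
          (Multiplicative.ofAdd (((i, j) : ZMod N × ZMod N).1, (0 : ZMod N)))) =
          (∑ j : ZMod N, c (i, j)) • MonoidAlgebra.of ℤ (Delta N)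
            (Multiplicative.ofAdd (i, (0 : ZMod N))) := by
        rw [Finset.sum_smul]
      rw [hrw, h1 i, zero_smul]
    have hz2 : (∑ p : ZMod N × ZMod N, c p •
        MonoidAlgebra.of ℤ (Delta N) (Multiplicative.ofAdd ((0 : ZMod N), p.2))) = 0 := by
      rw [Fintype.sum_prod_type_right]
      refine Finset.sum_eq_zero fun j _ => ?_
      have hrw : (∑ i : ZMod N, c (i, j) • MonoidAlgebra.of ℤ (Delta N)
          (Multiplicative.ofAdd ((0 : ZMod N), ((i, j) : ZMod N × ZMod N).2))) =
          (∑ i : ZMod N, c (i, j)) • MonoidAlgebra.of ℤ (Delta N)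
            (Multiplicative.ofAdd ((0 : ZMod N), j)) := by
        rw [Finset.sum_smul]
      rw [hrw, h2 j, zero_smul]
    have hz3 : (∑ p : ZMod N × ZMod N, c p) = 0 := by
      rw [Fintype.sum_prod_type]
      exact Finset.sum_eq_zero fun i _ => h1 i
    rw [hsplit, hz1, hz2, hz3, zero_smul, zero_add, sub_zero, add_zero]
    refine Ideal.sum_mem I fun p _ => ?_
    rw [zsmul_eq_mul]
    exact I.mul_mem_left _ (key_mem N p)
  · intro hmem
    rw [hI, Ideal.mem_span_singleton'] at hmem
    obtain ⟨g, hg⟩ := hmem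
    constructor
    · -- first marginal: push forward along first projection
      intro i
      set φ : Delta N →* Multiplicative (ZMod N) :=
        AddMonoidHom.toMultiplicative (AddMonoidHom.fst (ZMod N) (ZMod N)) with hφ
      have hπf : MonoidAlgebra.mapDomain φ f = 0 := by
        have : MonoidAlgebra.mapDomainRingHom ℤ φ f = 0 := by
          rw [← hg]
          have h1Y : MonoidAlgebra.mapDomainRingHom ℤ φ
              ((1 - MonoidAlgebra.of ℤ (Delta N) (eta N))) = 0 := by
            rw [map_sub, map_one]
            have : MonoidAlgebra.mapDomain φ (MonoidAlgebra.of ℤ (Delta N) (eta N)) =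
                MonoidAlgebra.of ℤ (Multiplicative (ZMod N)) (φ (eta N)) := by
              simp [MonoidAlgebra.of_apply, MonoidAlgebra.mapDomain_single]
            rw [show (MonoidAlgebra.mapDomainRingHom ℤ φ) (MonoidAlgebra.of ℤ (Delta N) (eta N))
              = MonoidAlgebra.mapDomain (⇑φ) (MonoidAlgebra.of ℤ (Delta N) (eta N)) from rfl, this]
            have : φ (eta N) = 1 := by
              rw [hφ, eta]; rfl
            rw [this, map_one, sub_self]
          rw [show g * ((1 - MonoidAlgebra.of ℤ (Delta N) (xi N)) *
              (1 - MonoidAlgebra.of ℤ (Delta N) (eta N))) =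
              (g * (1 - MonoidAlgebra.of ℤ (Delta N) (xi N))) *
              (1 - MonoidAlgebra.of ℤ (Delta N) (eta N)) from by ring]
          rw [map_mul, h1Y, mul_zero]
        exact this
      have := congrArg (fun h : MonoidAlgebra ℤ (Multiplicative (ZMod N)) =>
        h.coeff (Multiplicative.ofAdd i)) hπf
      change Finsupp.mapDomain φ f.coeff (Multiplicative.ofAdd i) =
        (0 : MonoidAlgebra ℤ (Multiplicative (ZMod N))).coeff (Multiplicative.ofAdd i) at this
      rw [mapDomain_apply_fintype] at this
      simp only [MonoidAlgebra.coeff_zero, Finsupp.coe_zero, Pi.zero_apply] at this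
      rw [← this]
      rw [← (Fintype.sum_equiv Multiplicative.ofAdd
        (fun p : ZMod N × ZMod N => if φ (Multiplicative.ofAdd p) = Multiplicative.ofAdd i
          then f.coeff (Multiplicative.ofAdd p) else 0)
        (fun g : Delta N => if φ g = Multiplicative.ofAdd i then f.coeff g else 0)
        (fun p => rfl))]
      rw [Fintype.sum_prod_type]
      have hcond : ∀ (a : ZMod N) (b : ZMod N),
          (φ (Multiplicative.ofAdd (a, b)) = Multiplicative.ofAdd i) ↔ a = i := by
        intro a b
        constructor
        · intro h; exact Multiplicative.ofAdd.injective h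
        · intro h; rw [h]; rfl
      calc ∑ j : ZMod N, f.coeff (Multiplicative.ofAdd (i, j))
          = ∑ a : ZMod N, if a = i then
              (∑ j : ZMod N, f.coeff (Multiplicative.ofAdd (a, j))) else 0 := by
            rw [Finset.sum_ite_eq' Finset.univ i
              (fun a => ∑ j : ZMod N, f.coeff (Multiplicative.ofAdd (a, j)))]
            simp
        _ = _ := by
            refine Finset.sum_congr rfl fun a _ => ?_
            by_cases h : a = i
            · simp only [h, if_true]
              refine Finset.sum_congr rfl fun b _ => ?_
              rw [if_pos ((hcond i b).mpr rfl)]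
            · simp only [h, if_false]
              refine (Finset.sum_eq_zero fun b _ => ?_).symm
              rw [if_neg (fun hh => h ((hcond a b).mp hh))]
    · -- second marginal
      intro j
      set φ : Delta N →* Multiplicative (ZMod N) :=
        AddMonoidHom.toMultiplicative (AddMonoidHom.snd (ZMod N) (ZMod N)) with hφ
      have hπf : MonoidAlgebra.mapDomain φ f = 0 := by
        have : MonoidAlgebra.mapDomainRingHom ℤ φ f = 0 := by
          rw [← hg]
          have h1X : MonoidAlgebra.mapDomainRingHom ℤ φ
              ((1 - MonoidAlgebra.of ℤ (Delta N) (xi N))) = 0 := by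
            rw [map_sub, map_one]
            have : MonoidAlgebra.mapDomain φ (MonoidAlgebra.of ℤ (Delta N) (xi N)) =
                MonoidAlgebra.of ℤ (Multiplicative (ZMod N)) (φ (xi N)) := by
              simp [MonoidAlgebra.of_apply, MonoidAlgebra.mapDomain_single]
            rw [show (MonoidAlgebra.mapDomainRingHom ℤ φ) (MonoidAlgebra.of ℤ (Delta N) (xi N))
              = MonoidAlgebra.mapDomain (⇑φ) (MonoidAlgebra.of ℤ (Delta N) (xi N)) from rfl, this]
            have : φ (xi N) = 1 := by
              rw [hφ, xi]; rfl
            rw [this, map_one, sub_self]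
          rw [show g * ((1 - MonoidAlgebra.of ℤ (Delta N) (xi N)) *
              (1 - MonoidAlgebra.of ℤ (Delta N) (eta N))) =
              (g * (1 - MonoidAlgebra.of ℤ (Delta N) (eta N))) *
              (1 - MonoidAlgebra.of ℤ (Delta N) (xi N)) from by ring]
          rw [map_mul, h1X, mul_zero]
        exact this
      have := congrArg (fun h : MonoidAlgebra ℤ (Multiplicative (ZMod N)) =>
        h.coeff (Multiplicative.ofAdd j)) hπf
      change Finsupp.mapDomain φ f.coeff (Multiplicative.ofAdd j) =
        (0 : MonoidAlgebra ℤ (Multiplicative (ZMod N))).coeff (Multiplicative.ofAdd j) at this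
      rw [mapDomain_apply_fintype] at this
      simp only [MonoidAlgebra.coeff_zero, Finsupp.coe_zero, Pi.zero_apply] at this
      rw [← this]
      rw [← (Fintype.sum_equiv Multiplicative.ofAdd
        (fun p : ZMod N × ZMod N => if φ (Multiplicative.ofAdd p) = Multiplicative.ofAdd j
          then f.coeff (Multiplicative.ofAdd p) else 0)
        (fun g : Delta N => if φ g = Multiplicative.ofAdd j then f.coeff g else 0)
        (fun p => rfl))]
      rw [Fintype.sum_prod_type_right]
      have hcond : ∀ (a : ZMod N) (b : ZMod N),
          (φ (Multiplicative.ofAdd (a, b)) = Multiplicative.ofAdd j) ↔ b = j := by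
        intro a b
        constructor
        · intro h; exact Multiplicative.ofAdd.injective h
        · intro h; rw [h]; rfl
      calc ∑ i : ZMod N, f.coeff (Multiplicative.ofAdd (i, j))
          = ∑ b : ZMod N, if b = j then
              (∑ i : ZMod N, f.coeff (Multiplicative.ofAdd (i, b))) else 0 := by
            rw [Finset.sum_ite_eq' Finset.univ j
              (fun b => ∑ i : ZMod N, f.coeff (Multiplicative.ofAdd (i, b)))]
            simp
        _ = _ := by
            refine Finset.sum_congr rfl fun b _ => ?_
            by_cases h : b = j
            · simp only [h, if_true]
              refine Finset.sum_congr rfl fun a _ => ?_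
              rw [if_pos ((hcond a j).mpr rfl)]
            · simp only [h, if_false]
              refine (Finset.sum_eq_zero fun a _ => ?_).symm
              rw [if_neg (fun hh => h ((hcond a b).mp hh))]
end

section
/- For every positive integer N, the annihilator of the element (1−ξ_N)(1−η_N) in the ring ℤ[Δ_N] equals the ideal I_N; equivalently, the annihilator ideal of the cyclic ℤ[Δ_N]-module ℤ[Δ_N]·(1−ξ_N)(1−η_N) is I_N. (Claim used in the proof of Theorem 2.5(ii) of the paper.) -/
namespace adelicHGF

/-- The element `∑_{i ∈ ℤ/Nℤ} ξ_N^i` of the group ring `ℤ[Δ_N]`. -/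
noncomputable def sumXi (N : ℕ) [NeZero N] : MonoidAlgebra ℤ (Delta N) :=
  ∑ i : ZMod N, MonoidAlgebra.of ℤ (Delta N) (Multiplicative.ofAdd (i, (0 : ZMod N)))

/-- The element `∑_{j ∈ ℤ/Nℤ} η_N^j` of the group ring `ℤ[Δ_N]`. -/
noncomputable def sumEta (N : ℕ) [NeZero N] : MonoidAlgebra ℤ (Delta N) :=
  ∑ j : ZMod N, MonoidAlgebra.of ℤ (Delta N) (Multiplicative.ofAdd ((0 : ZMod N), j))

/-- The ideal `I_N ⊆ ℤ[Δ_N]` generated by `∑_i ξ_N^i` and `∑_j η_N^j`. -/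
noncomputable def IN (N : ℕ) [NeZero N] : Ideal (MonoidAlgebra ℤ (Delta N)) :=
  Ideal.span {sumXi N, sumEta N}

open Multiplicative

/-- Evaluation of a double sum of singles. -/
lemma aux_eval (N : ℕ) [NeZero N] (c : ZMod N → ZMod N → ℤ) (p : Delta N) :
    ((∑ x : ZMod N, ∑ y : ZMod N,
      MonoidAlgebra.single (ofAdd ((x, y) : ZMod N × ZMod N)) (c x y) : MonoidAlgebra ℤ (Delta N))
      ).coeff p = c (toAdd p).1 (toAdd p).2 := by
  classical
  simp only [MonoidAlgebra.coeff_sum, MonoidAlgebra.coeff_single, Finsupp.finset_sum_apply, Finsupp.single_apply]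
  simp only [show ∀ x y : ZMod N, (ofAdd ((x, y) : ZMod N × ZMod N) = p) ↔
      ((x = (toAdd p).1) ∧ (y = (toAdd p).2)) from fun x y => by
    rw [show p = ofAdd (((toAdd p).1, (toAdd p).2)) by simp]
    rw [EmbeddingLike.apply_eq_iff_eq, Prod.mk.injEq]
    simp]
  simp only [ite_and]
  rw [Finset.sum_eq_single (toAdd p).1, Finset.sum_eq_single (toAdd p).2] <;>
    simp +contextual

lemma sumXi_ann (N : ℕ) [NeZero N] :
    sumXi N * (1 - MonoidAlgebra.of ℤ (Delta N) (xi N)) = 0 := by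
  rw [mul_sub, mul_one, sub_eq_zero, sumXi, xi, Finset.sum_mul]
  refine Fintype.sum_equiv (Equiv.subRight (1 : ZMod N)) _ _ fun i => ?_
  simp only [Equiv.subRight_apply]
  rw [← map_mul, ← ofAdd_add, Prod.mk_add_mk, add_zero, sub_add_cancel]

lemma sumEta_ann (N : ℕ) [NeZero N] :
    sumEta N * (1 - MonoidAlgebra.of ℤ (Delta N) (eta N)) = 0 := by
  rw [mul_sub, mul_one, sub_eq_zero, sumEta, eta, Finset.sum_mul]
  refine Fintype.sum_equiv (Equiv.subRight (1 : ZMod N)) _ _ fun j => ?_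
  simp only [Equiv.subRight_apply]
  rw [← map_mul, ← ofAdd_add, Prod.mk_add_mk, add_zero, sub_add_cancel]

theorem ann_aux (N : ℕ) [NeZero N]
    (f : MonoidAlgebra ℤ (Delta N)) :
    f * ((1 - MonoidAlgebra.of ℤ (Delta N) (xi N)) *
        (1 - MonoidAlgebra.of ℤ (Delta N) (eta N))) = 0 ↔ f ∈ IN N := by
  classical
  constructor
  · intro h
    set a : ZMod N → ZMod N → ℤ :=
      fun i j => f.coeff (ofAdd ((i, j) : ZMod N × ZMod N)) with ha_def
    -- Step 1: the basic coefficient relation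
    have hc : ∀ i j : ZMod N,
        a i j - a (i-1) j - a i (j-1) + a (i-1) (j-1) = 0 := by
      intro i j
      have hXY : (MonoidAlgebra.single (ofAdd (((1:ZMod N),(0:ZMod N)))) 1 : MonoidAlgebra ℤ (Delta N)) *
          MonoidAlgebra.single (ofAdd (((0:ZMod N),(1:ZMod N)))) 1
          = MonoidAlgebra.single (ofAdd (((1:ZMod N),(1:ZMod N)))) 1 := by
        rw [MonoidAlgebra.single_mul_single, ← ofAdd_add, Prod.mk_add_mk, one_mul, add_zero,
          zero_add]
      have hexp : f - f * MonoidAlgebra.single (ofAdd (((1:ZMod N),(0:ZMod N)))) 1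
          - f * MonoidAlgebra.single (ofAdd (((0:ZMod N),(1:ZMod N)))) 1
          + f * MonoidAlgebra.single (ofAdd (((1:ZMod N),(1:ZMod N)))) 1 = 0 := by
        simp only [xi, eta, MonoidAlgebra.of_apply] at h
        rw [← hXY]
        linear_combination h
      have hexp' : (f - f * MonoidAlgebra.single (ofAdd (((1:ZMod N),(0:ZMod N)))) 1
          - f * MonoidAlgebra.single (ofAdd (((0:ZMod N),(1:ZMod N)))) 1
          + f * MonoidAlgebra.single (ofAdd (((1:ZMod N),(1:ZMod N)))) 1
            : MonoidAlgebra ℤ (Delta N)).coeff = (0 : MonoidAlgebra ℤ (Delta N)).coeff :=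
          congrArg MonoidAlgebra.coeff hexp
      have key := DFunLike.congr_fun hexp' (ofAdd ((i, j) : ZMod N × ZMod N))
      rw [MonoidAlgebra.coeff_add, MonoidAlgebra.coeff_sub, MonoidAlgebra.coeff_sub,
        MonoidAlgebra.coeff_zero,
        Finsupp.add_apply, Finsupp.sub_apply, Finsupp.sub_apply, Finsupp.zero_apply,
        show ((f * MonoidAlgebra.single (ofAdd (((1:ZMod N),(0:ZMod N)))) 1 : MonoidAlgebra ℤ (Delta N))).coeff
          (ofAdd ((i,j) : ZMod N × ZMod N))
          = f.coeff ((ofAdd ((i,j) : ZMod N × ZMod N)) *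
            (ofAdd (((1:ZMod N),(0:ZMod N))))⁻¹) * 1 from
          MonoidAlgebra.coeff_mul_single_apply f 1 _ _,
        show ((f * MonoidAlgebra.single (ofAdd (((0:ZMod N),(1:ZMod N)))) 1 : MonoidAlgebra ℤ (Delta N))).coeff
          (ofAdd ((i,j) : ZMod N × ZMod N))
          = f.coeff ((ofAdd ((i,j) : ZMod N × ZMod N)) *
            (ofAdd (((0:ZMod N),(1:ZMod N))))⁻¹) * 1 from
          MonoidAlgebra.coeff_mul_single_apply f 1 _ _,
        show ((f * MonoidAlgebra.single (ofAdd (((1:ZMod N),(1:ZMod N)))) 1 : MonoidAlgebra ℤ (Delta N))).coeff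
          (ofAdd ((i,j) : ZMod N × ZMod N))
          = f.coeff ((ofAdd ((i,j) : ZMod N × ZMod N)) *
            (ofAdd (((1:ZMod N),(1:ZMod N))))⁻¹) * 1 from
          MonoidAlgebra.coeff_mul_single_apply f 1 _ _] at key
      have e1 : (ofAdd ((i,j) : ZMod N × ZMod N)) * (ofAdd (((1:ZMod N),(0:ZMod N))))⁻¹
          = ofAdd ((i-1,j) : ZMod N × ZMod N) := by
        rw [← ofAdd_neg, ← ofAdd_add, Prod.neg_mk, Prod.mk_add_mk, neg_zero, add_zero,
          ← sub_eq_add_neg]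
      have e2 : (ofAdd ((i,j) : ZMod N × ZMod N)) * (ofAdd (((0:ZMod N),(1:ZMod N))))⁻¹
          = ofAdd ((i,j-1) : ZMod N × ZMod N) := by
        rw [← ofAdd_neg, ← ofAdd_add, Prod.neg_mk, Prod.mk_add_mk, neg_zero, add_zero,
          ← sub_eq_add_neg]
      have e3 : (ofAdd ((i,j) : ZMod N × ZMod N)) * (ofAdd (((1:ZMod N),(1:ZMod N))))⁻¹
          = ofAdd ((i-1,j-1) : ZMod N × ZMod N) := by
        rw [← ofAdd_neg, ← ofAdd_add, Prod.neg_mk, Prod.mk_add_mk, ← sub_eq_add_neg,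
          ← sub_eq_add_neg]
      rw [e1, e2, e3] at key
      simpa [ha_def] using key
    -- Step 2: the horizontal difference is independent of the second coordinate
    have hb : ∀ i j : ZMod N, a i j - a (i-1) j = a i 0 - a (i-1) 0 := by
      have key : ∀ (m : ℕ) (i j : ZMod N),
          a i j - a (i-1) j = a i (j - (m : ZMod N)) - a (i-1) (j - (m : ZMod N)) := by
        intro m
        induction m with
        | zero => simp
        | succ m ih =>
          intro i j
          have h1 := hc i (j - (m : ZMod N))
          have e : (j - (m : ZMod N)) - 1 = j - ((m + 1 : ℕ) : ZMod N) := by push_cast; ring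
          rw [e] at h1
          rw [ih i j]
          linarith
      intro i j
      have h2 := key j.val i j
      rwa [ZMod.natCast_rightInverse j, sub_self] at h2
    -- Step 3: a i j = a 0 j + (a i 0 - a 0 0)
    have hA : ∀ (n : ℕ) (j : ZMod N), a (n : ZMod N) j - a 0 j = a (n : ZMod N) 0 - a 0 0 := by
      intro n
      induction n with
      | zero => simp
      | succ n ih =>
        intro j
        have h1 := hb ((n + 1 : ℕ) : ZMod N) j
        have e : ((n + 1 : ℕ) : ZMod N) - 1 = (n : ZMod N) := by push_cast; ring
        rw [e] at h1
        have h2 := ih j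
        linarith
    have hA' : ∀ i j : ZMod N, a i j = a 0 j + (a i 0 - a 0 0) := by
      intro i j
      have h1 := hA i.val j
      rw [ZMod.natCast_rightInverse i] at h1
      linarith
    -- Step 4: decompose f
    rw [IN, Ideal.mem_span_pair]
    refine ⟨∑ j : ZMod N, MonoidAlgebra.single (ofAdd (((0:ZMod N), j) : ZMod N × ZMod N)) (a 0 j),
      ∑ i : ZMod N, MonoidAlgebra.single (ofAdd ((i, (0:ZMod N)) : ZMod N × ZMod N)) (a i 0 - a 0 0),
      ?_⟩
    have hvX : (∑ j : ZMod N,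
        MonoidAlgebra.single (ofAdd (((0:ZMod N), j) : ZMod N × ZMod N)) (a 0 j)) * sumXi N
        = ∑ x : ZMod N, ∑ y : ZMod N,
          MonoidAlgebra.single (ofAdd ((x, y) : ZMod N × ZMod N)) (a 0 y) := by
      rw [sumXi, Finset.sum_mul_sum, Finset.sum_comm]
      refine Finset.sum_congr rfl fun x _ => Finset.sum_congr rfl fun y _ => ?_
      rw [MonoidAlgebra.of_apply, MonoidAlgebra.single_mul_single, mul_one, ← ofAdd_add,
        Prod.mk_add_mk, add_zero, zero_add]
    have huY : (∑ i : ZMod N,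
        MonoidAlgebra.single (ofAdd ((i, (0:ZMod N)) : ZMod N × ZMod N)) (a i 0 - a 0 0)) * sumEta N
        = ∑ x : ZMod N, ∑ y : ZMod N,
          MonoidAlgebra.single (ofAdd ((x, y) : ZMod N × ZMod N)) (a x 0 - a 0 0) := by
      rw [sumEta, Finset.sum_mul_sum]
      refine Finset.sum_congr rfl fun x _ => Finset.sum_congr rfl fun y _ => ?_
      rw [MonoidAlgebra.of_apply, MonoidAlgebra.single_mul_single, mul_one, ← ofAdd_add,
        Prod.mk_add_mk, add_zero, zero_add]
    rw [hvX, huY]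
    apply MonoidAlgebra.ext
    apply Finsupp.ext
    intro p
    rw [MonoidAlgebra.coeff_add, Finsupp.add_apply, aux_eval, aux_eval]
    have : f.coeff p = a (toAdd p).1 (toAdd p).2 := by
      simp [ha_def]
    rw [this]
    linarith [hA' (toAdd p).1 (toAdd p).2]
  · intro hf
    rw [IN, Ideal.mem_span_pair] at hf
    obtain ⟨c, d, hcd⟩ := hf
    rw [← hcd]
    calc (c * sumXi N + d * sumEta N) *
          ((1 - MonoidAlgebra.of ℤ (Delta N) (xi N)) * (1 - MonoidAlgebra.of ℤ (Delta N) (eta N)))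
        = c * (sumXi N * (1 - MonoidAlgebra.of ℤ (Delta N) (xi N))) *
            (1 - MonoidAlgebra.of ℤ (Delta N) (eta N))
          + d * (sumEta N * (1 - MonoidAlgebra.of ℤ (Delta N) (eta N))) *
            (1 - MonoidAlgebra.of ℤ (Delta N) (xi N)) := by ring
      _ = 0 := by rw [sumXi_ann, sumEta_ann]; ring

end adelicHGF

open adelicHGF in
/-- **Claim used in the proof of Theorem 2.5(ii)**: for every positive integer `N`, the
annihilator of the element `(1 - ξ_N)(1 - η_N)` in the ring `ℤ[Δ_N]` equals the ideal `I_N`: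
`f · (1 - ξ_N)(1 - η_N) = 0` if and only if `f ∈ I_N`. -/
theorem adelicHGF.ann_one_sub_xi_mul_one_sub_eta (N : ℕ) [NeZero N]
    (f : MonoidAlgebra ℤ (Delta N)) :
    f * ((1 - MonoidAlgebra.of ℤ (Delta N) (xi N)) *
        (1 - MonoidAlgebra.of ℤ (Delta N) (eta N))) = 0 ↔ f ∈ IN N :=
  adelicHGF.ann_aux N f
end

section
/- For every positive integer N, the image of the element (1−ξ_N)(1−η_N) in the quotient ring ℤ[Δ_N]/I_N is a non-zero-divisor: if f ∈ ℤ[Δ_N] satisfies f·(1−ξ_N)(1−η_N) ∈ I_N, then f ∈ I_N. (Claim used in the proof of Theorem 2.5(iii) of the paper.) -/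
namespace adelicHGF

/-- Shorthand for the group element `(i,j)` of `Δ_N`. -/
def e (N : ℕ) (i j : ZMod N) : Delta N := Multiplicative.ofAdd (i, j)

lemma e_inj {N : ℕ} {i j i' j' : ZMod N} : e N i j = e N i' j' ↔ i = i' ∧ j = j' := by
  constructor
  · intro h
    have h2 : ((i, j) : ZMod N × ZMod N) = (i', j') := Multiplicative.ofAdd.injective h
    exact ⟨congrArg Prod.fst h2, congrArg Prod.snd h2⟩
  · rintro ⟨rfl, rfl⟩; rfl

lemma e_mul_inv {N : ℕ} (i j k l : ZMod N) : e N i j * (e N k l)⁻¹ = e N (i - k) (j - l) := by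
  show Multiplicative.ofAdd _ * (Multiplicative.ofAdd _)⁻¹ = _
  rw [← ofAdd_neg, ← ofAdd_add]
  congr 1
  simp [Prod.ext_iff, sub_eq_add_neg]

lemma coeff_mul_of {N : ℕ} (f : MonoidAlgebra ℤ (Delta N)) (g t : Delta N) :
    (f * MonoidAlgebra.of ℤ (Delta N) g).coeff t = f.coeff (t * g⁻¹) := by
  rw [MonoidAlgebra.of_apply, MonoidAlgebra.coeff_mul_single_apply, mul_one]

lemma coeff_mul_sumXi (N : ℕ) [NeZero N] (a : MonoidAlgebra ℤ (Delta N)) (i j : ZMod N) :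
    (a * sumXi N).coeff (e N i j) = ∑ k : ZMod N, a.coeff (e N k j) := by
  rw [sumXi, Finset.mul_sum, MonoidAlgebra.coeff_sum, Finsupp.finset_sum_apply]
  have h1 : ∀ k : ZMod N,
      (a * MonoidAlgebra.of ℤ (Delta N) (Multiplicative.ofAdd (k, (0 : ZMod N)))).coeff (e N i j)
        = a.coeff (e N (i - k) j) := by
    intro k
    rw [show Multiplicative.ofAdd (k, (0 : ZMod N)) = e N k 0 from rfl, coeff_mul_of,
      e_mul_inv, sub_zero]
  simp_rw [h1]
  exact Fintype.sum_equiv (Equiv.subLeft i) _ _ (fun k => rfl)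

lemma coeff_mul_sumEta (N : ℕ) [NeZero N] (b : MonoidAlgebra ℤ (Delta N)) (i j : ZMod N) :
    (b * sumEta N).coeff (e N i j) = ∑ k : ZMod N, b.coeff (e N i k) := by
  rw [sumEta, Finset.mul_sum, MonoidAlgebra.coeff_sum, Finsupp.finset_sum_apply]
  have h1 : ∀ k : ZMod N,
      (b * MonoidAlgebra.of ℤ (Delta N) (Multiplicative.ofAdd ((0 : ZMod N), k))).coeff (e N i j)
        = b.coeff (e N i (j - k)) := by
    intro k
    rw [show Multiplicative.ofAdd ((0 : ZMod N), k) = e N 0 k from rfl, coeff_mul_of,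
      e_mul_inv, sub_zero]
  simp_rw [h1]
  exact Fintype.sum_equiv (Equiv.subLeft j) _ _ (fun k => rfl)

/-- Telescoping sum over `ZMod N`. -/
lemma tele (N : ℕ) [NeZero N] (G : ZMod N → ℤ) : ∑ i : ZMod N, G (i - 1) = ∑ i : ZMod N, G i :=
  Fintype.sum_equiv (Equiv.subRight 1) _ _ (fun _ => rfl)

/-- The combinatorial heart of the argument. -/
lemma key (N : ℕ) [NeZero N] (F : ZMod N → ZMod N → ℤ) (A B : ZMod N → ℤ)
    (h : ∀ i j, A j + B i = F i j - F (i-1) j - F i (j-1) + F (i-1) (j-1)) :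
    ∀ i j, F i j = (F 0 j - F 0 0) + F i 0 := by
  have natsurj : ∀ x : ZMod N, ∃ n : ℕ, (n : ZMod N) = x := fun x => ⟨x.val, by simp⟩
  have hN : (N : ℤ) ≠ 0 := by exact_mod_cast (NeZero.ne N)
  -- Row sums
  have hsum1 : ∀ j, (N : ℤ) * A j + ∑ i : ZMod N, B i = 0 := by
    intro j
    have h1 : ∑ i : ZMod N, (A j + B i)
        = ∑ i : ZMod N, (F i j - F (i-1) j - F i (j-1) + F (i-1) (j-1)) :=
      Finset.sum_congr rfl (fun i _ => h i j)
    have h2 : ∑ i : ZMod N, (A j + B i) = (N : ℤ) * A j + ∑ i : ZMod N, B i := by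
      rw [Finset.sum_add_distrib, Finset.sum_const, Finset.card_univ, ZMod.card]
      ring
    have h3 : ∑ i : ZMod N, (F i j - F (i-1) j - F i (j-1) + F (i-1) (j-1)) = 0 := by
      simp only [Finset.sum_add_distrib, Finset.sum_sub_distrib]
      rw [tele N (fun i => F i j), tele N (fun i => F i (j-1))]
      ring
    rw [h2, h3] at h1; exact h1
  have hsum2 : ∀ i, (N : ℤ) * B i + ∑ j : ZMod N, A j = 0 := by
    intro i
    have h1 : ∑ j : ZMod N, (A j + B i)
        = ∑ j : ZMod N, (F i j - F (i-1) j - F i (j-1) + F (i-1) (j-1)) :=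
      Finset.sum_congr rfl (fun j _ => h i j)
    have h2 : ∑ j : ZMod N, (A j + B i) = (N : ℤ) * B i + ∑ j : ZMod N, A j := by
      rw [Finset.sum_add_distrib, Finset.sum_const, Finset.card_univ, ZMod.card]
      ring
    have h3 : ∑ j : ZMod N, (F i j - F (i-1) j - F i (j-1) + F (i-1) (j-1)) = 0 := by
      simp only [Finset.sum_add_distrib, Finset.sum_sub_distrib]
      rw [tele N (fun j => F i j), tele N (fun j => F (i-1) j)]
      ring
    rw [h2, h3] at h1; exact h1
  -- A and B are constant
  have hA : ∀ j, A j = A 0 := by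
    intro j
    have := hsum1 j; have h0 := hsum1 0
    have : (N : ℤ) * A j = (N : ℤ) * A 0 := by linarith
    exact mul_left_cancel₀ hN this
  have hB : ∀ i, B i = B 0 := by
    intro i
    have := hsum2 i; have h0 := hsum2 0
    have : (N : ℤ) * B i = (N : ℤ) * B 0 := by linarith
    exact mul_left_cancel₀ hN this
  have hsA : ∑ j : ZMod N, A j = (N : ℤ) * A 0 := by
    rw [Finset.sum_congr rfl (fun j _ => hA j), Finset.sum_const, Finset.card_univ, ZMod.card]
    ring
  have hsB : ∑ i : ZMod N, B i = (N : ℤ) * B 0 := by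
    rw [Finset.sum_congr rfl (fun i _ => hB i), Finset.sum_const, Finset.card_univ, ZMod.card]
    ring
  -- A j + B i = 0 for all i j
  have hzero : ∀ i j, A j + B i = 0 := by
    intro i j
    have e1 := hsum1 j; rw [hsB] at e1
    have e2 := hsum2 i; rw [hsA] at e2
    have e3 := hsum1 0; rw [hsB] at e3
    have : (N : ℤ) * (A j + B i) = 0 := by linarith
    have := mul_eq_zero.mp this
    tauto
  have hD : ∀ i j, F i j - F (i-1) j - F i (j-1) + F (i-1) (j-1) = 0 := by
    intro i j; rw [← h i j]; exact hzero i j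
  -- Column differences are independent of j
  have hH : ∀ i j, F i j - F (i-1) j = F i 0 - F (i-1) 0 := by
    intro i j
    obtain ⟨n, rfl⟩ := natsurj j
    induction n with
    | zero => norm_num
    | succ n ih =>
      have hc : (((n : ℕ) : ZMod N)) = (((n+1 : ℕ) : ZMod N)) - 1 := by push_cast; ring
      have := hD i ((n+1 : ℕ) : ZMod N)
      rw [← hc] at this
      linarith
  -- Conclude
  intro i j
  obtain ⟨m, rfl⟩ := natsurj i
  induction m with
  | zero => norm_num
  | succ m ih =>
    have hc : (((m : ℕ) : ZMod N)) = (((m+1 : ℕ) : ZMod N)) - 1 := by push_cast; ring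
    have h1 := hH ((m+1 : ℕ) : ZMod N) j
    have h2 := hH ((m+1 : ℕ) : ZMod N) 0
    rw [← hc] at h1 h2
    linarith

end adelicHGF

open adelicHGF in
/-- **Claim used in the proof of Theorem 2.5(iii)**: for every positive integer `N`, the image
of `(1 - ξ_N)(1 - η_N)` in `ℤ[Δ_N]/I_N` is a non-zero-divisor: if
`f · (1 - ξ_N)(1 - η_N) ∈ I_N`, then `f ∈ I_N`. -/
theorem adelicHGF.one_sub_xi_mul_one_sub_eta_nonZeroDivisor (N : ℕ) [NeZero N]
    (f : MonoidAlgebra ℤ (Delta N))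
    (h : f * ((1 - MonoidAlgebra.of ℤ (Delta N) (xi N)) *
        (1 - MonoidAlgebra.of ℤ (Delta N) (eta N))) ∈ IN N) :
    f ∈ IN N := by
  rw [IN, Ideal.mem_span_pair] at h
  obtain ⟨a, b, hab⟩ := h
  set X := MonoidAlgebra.of ℤ (Delta N) (xi N) with hX
  set Y := MonoidAlgebra.of ℤ (Delta N) (eta N) with hY
  have hexp : f * ((1 - X) * (1 - Y)) = f - f * X - f * Y + f * (X * Y) := by ring
  have hXY : X * Y = MonoidAlgebra.of ℤ (Delta N) (e N 1 1) := by
    rw [hX, hY, ← map_mul]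
    congr 1
    rw [xi, eta, e, ← ofAdd_add]
    congr 1
    simp [Prod.ext_iff]
  -- coefficient identity
  have hcoeff : ∀ i j : ZMod N,
      (∑ k : ZMod N, a.coeff (e N k j)) + (∑ k : ZMod N, b.coeff (e N i k))
        = f.coeff (e N i j) - f.coeff (e N (i-1) j) - f.coeff (e N i (j-1))
          + f.coeff (e N (i-1) (j-1)) := by
    intro i j
    have h1 := congrArg (fun g : MonoidAlgebra ℤ (Delta N) => g.coeff (e N i j)) hab
    rw [MonoidAlgebra.coeff_add, Finsupp.add_apply, coeff_mul_sumXi, coeff_mul_sumEta, hexp, hXY] at h1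
    rw [MonoidAlgebra.coeff_add, Finsupp.add_apply, MonoidAlgebra.coeff_sub, Finsupp.sub_apply,
      MonoidAlgebra.coeff_sub, Finsupp.sub_apply] at h1
    rw [coeff_mul_of, coeff_mul_of, coeff_mul_of] at h1
    rw [show xi N = e N 1 0 from rfl, show eta N = e N 0 1 from rfl] at h1
    rw [e_mul_inv, e_mul_inv, e_mul_inv, sub_zero, sub_zero] at h1
    exact h1
  have hk := key N (fun i j => f.coeff (e N i j)) (fun j => ∑ k : ZMod N, a.coeff (e N k j))
    (fun i => ∑ k : ZMod N, b.coeff (e N i k)) hcoeff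
  -- build the witnesses
  set P : ZMod N → ℤ := fun j => f.coeff (e N 0 j) - f.coeff (e N 0 0) with hP
  set Q : ZMod N → ℤ := fun i => f.coeff (e N i 0) with hQ
  set u : MonoidAlgebra ℤ (Delta N) := ∑ j : ZMod N, MonoidAlgebra.single (e N 0 j) (P j) with hu
  set v : MonoidAlgebra ℤ (Delta N) := ∑ i : ZMod N, MonoidAlgebra.single (e N i 0) (Q i) with hv
  have hucoeff : ∀ k j : ZMod N, u.coeff (e N k j) = if k = 0 then P j else 0 := by
    intro k j
    rw [hu, MonoidAlgebra.coeff_sum, Finsupp.finset_sum_apply]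
    by_cases hk : k = 0
    · subst hk
      rw [Finset.sum_eq_single j]
      · simp [MonoidAlgebra.coeff_single, Finsupp.single_apply]
      · intro j' _ hj'
        rw [MonoidAlgebra.coeff_single, Finsupp.single_apply, if_neg]
        rw [e_inj]; tauto
      · simp
    · rw [if_neg hk]
      apply Finset.sum_eq_zero
      intro j' _
      rw [MonoidAlgebra.coeff_single, Finsupp.single_apply, if_neg]
      rw [e_inj]; tauto
  have hvcoeff : ∀ i k : ZMod N, v.coeff (e N i k) = if k = 0 then Q i else 0 := by
    intro i k
    rw [hv, MonoidAlgebra.coeff_sum, Finsupp.finset_sum_apply]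
    by_cases hk : k = 0
    · subst hk
      rw [Finset.sum_eq_single i]
      · simp [MonoidAlgebra.coeff_single, Finsupp.single_apply]
      · intro i' _ hi'
        rw [MonoidAlgebra.coeff_single, Finsupp.single_apply, if_neg]
        rw [e_inj]; tauto
      · simp
    · rw [if_neg hk]
      apply Finset.sum_eq_zero
      intro i' _
      rw [MonoidAlgebra.coeff_single, Finsupp.single_apply, if_neg]
      rw [e_inj]; tauto
  rw [IN, Ideal.mem_span_pair]
  refine ⟨u, v, ?_⟩
  ext t
  obtain ⟨⟨i, j⟩, rfl⟩ : ∃ p : ZMod N × ZMod N, Multiplicative.ofAdd p = t :=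
    ⟨Multiplicative.toAdd t, rfl⟩
  rw [show Multiplicative.ofAdd (i, j) = e N i j from rfl]
  rw [MonoidAlgebra.coeff_add, Finsupp.add_apply, coeff_mul_sumXi, coeff_mul_sumEta]
  have h1 : ∑ k : ZMod N, u.coeff (e N k j) = P j := by
    simp [hucoeff]
  have h2 : ∑ k : ZMod N, v.coeff (e N i k) = Q i := by
    simp [hvcoeff]
  rw [h1, h2]
  have := hk i j
  simp only [hP, hQ]
  linarith
end

section
/- Let κ be a finite field, let α and β be nontrivial multiplicative characters of κ with values in ℂ (extended by α(0) = β(0) = 0), and write ᾱ, β̄ for the characters x ↦ α(x)⁻¹, x ↦ β(x)⁻¹ on κˣ, extended by 0 at 0. Then for every λ ∈ κ with λ ≠ 0 and λ ≠ 1, ∑_{t∈κ} ᾱ(1−λt) β(t) β̄(1−t) = β(−1) · ∑_{(u,v)∈κ², (1−u)(1−v)=λuv} α(u) β(v). (This character-sum identity is the paper's derivation of its formula (hgf-fin-i2), expressing the finite-field hypergeometric value F(α,β;ε;λ) as a point count on the hypergeometric curve.) -/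
private lemma mulchar_inv_val {κ : Type*} [Field κ] (χ : MulChar κ ℂ) {a : κ} (ha : a ≠ 0) :
    χ a⁻¹ = (χ a)⁻¹ := by
  refine eq_inv_of_mul_eq_one_left ?_
  rw [← map_mul, inv_mul_cancel₀ ha, map_one]

private lemma mulchar_ne_zero {κ : Type*} [Field κ] (χ : MulChar κ ℂ) {a : κ} (ha : a ≠ 0) :
    χ a ≠ 0 := by
  intro h
  have : χ a * χ a⁻¹ = 1 := by rw [← map_mul, mul_inv_cancel₀ ha, map_one]
  rw [h, zero_mul] at this
  exact zero_ne_one this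

/-- **Character-sum identity behind formula (hgf-fin-i2)**: let `κ` be a finite field, `α`,
`β` nontrivial multiplicative characters of `κ` with values in `ℂ` (extended by `0` at `0`;
`α⁻¹`, `β⁻¹` denote the inverse characters `x ↦ α(x)⁻¹`, `x ↦ β(x)⁻¹`, also extended by `0`
at `0`).  Then for every `λ ∈ κ` with `λ ≠ 0`, `λ ≠ 1`:
`∑_{t∈κ} α⁻¹(1−λt) β(t) β⁻¹(1−t) = β(−1) · ∑_{(u,v): (1−u)(1−v)=λuv} α(u) β(v)`. -/
theorem adelicHGF.finite_hgf_point_count {κ : Type*} [Field κ] [Fintype κ] [DecidableEq κ]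
    (α β : MulChar κ ℂ) (hα : α ≠ 1) (hβ : β ≠ 1)
    (l : κ) (hl0 : l ≠ 0) (hl1 : l ≠ 1) :
    ∑ t : κ, α⁻¹ (1 - l * t) * β t * β⁻¹ (1 - t) =
      β (-1) *
        ∑ p ∈ Finset.univ.filter
            (fun p : κ × κ => (1 - p.1) * (1 - p.2) = l * p.1 * p.2),
          α p.1 * β p.2 := by
  classical
  -- restrict LHS sum to good t
  have hL : (∑ t : κ, α⁻¹ (1 - l * t) * β t * β⁻¹ (1 - t)) =
      ∑ t ∈ Finset.univ.filter
        (fun t : κ => t ≠ 0 ∧ t ≠ 1 ∧ 1 - l * t ≠ 0),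
        α⁻¹ (1 - l * t) * β t * β⁻¹ (1 - t) := by
    refine (Finset.sum_filter_of_ne ?_).symm
    intro t _ h
    refine ⟨?_, ?_, ?_⟩
    · rintro rfl
      simp [MulChar.map_zero] at h
    · rintro rfl
      simp [MulChar.map_zero] at h
    · intro h0
      rw [h0] at h
      simp [MulChar.map_zero] at h
  -- restrict RHS sum to good points
  have hR : (∑ p ∈ Finset.univ.filter
        (fun p : κ × κ => (1 - p.1) * (1 - p.2) = l * p.1 * p.2), α p.1 * β p.2) =
      ∑ p ∈ Finset.univ.filter
        (fun p : κ × κ => ((1 - p.1) * (1 - p.2) = l * p.1 * p.2 ∧ p.1 ≠ 0) ∧ p.2 ≠ 0),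
        α p.1 * β p.2 := by
    symm
    refine Finset.sum_subset ?_ ?_
    · intro p hp
      simp only [Finset.mem_filter] at hp ⊢
      exact ⟨hp.1, hp.2.1.1⟩
    · intro p hp hnp
      simp only [Finset.mem_filter, Finset.mem_univ, true_and] at hp hnp
      rcases not_and_or.mp hnp with h | h
      · rcases not_and_or.mp h with h | h
        · exact absurd hp h
        · rw [not_not.mp h, MulChar.map_zero, zero_mul]
      · rw [not_not.mp h, MulChar.map_zero, mul_zero]
  rw [hL, hR, Finset.mul_sum]
  refine Finset.sum_nbij' (fun t => ((1 - l * t)⁻¹, t / (t - 1)))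
    (fun p => (p.1 - 1) / (l * p.1)) ?_ ?_ ?_ ?_ ?_
  · -- maps into the curve
    intro t ht
    simp only [Finset.mem_filter, Finset.mem_univ, true_and] at ht ⊢
    obtain ⟨ht0, ht1, hlt⟩ := ht
    have ht1' : t - 1 ≠ 0 := sub_ne_zero.mpr ht1
    refine ⟨⟨?_, ?_⟩, ?_⟩
    · field_simp
      try ring
    · exact inv_ne_zero hlt
    · exact div_ne_zero ht0 ht1'
  · -- inverse maps back
    intro p hp
    simp only [Finset.mem_filter, Finset.mem_univ, true_and] at hp ⊢
    obtain ⟨⟨hc, hu0⟩, hv0⟩ := hp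
    have hu1 : p.1 ≠ 1 := by
      intro h1
      apply hv0
      rw [h1] at hc
      have h2 : l * 1 * p.2 = 0 := by linear_combination -hc
      rcases mul_eq_zero.mp h2 with h | h
      · exact absurd (by simpa using h) hl0
      · exact h
    refine ⟨?_, ?_, ?_⟩
    · exact div_ne_zero (sub_ne_zero.mpr hu1) (mul_ne_zero hl0 hu0)
    · -- t ≠ 1
      intro h
      have h' : p.1 - 1 = l * p.1 :=
        (div_eq_one_iff_eq (mul_ne_zero hl0 hu0)).mp h
      have h2 : 1 - p.1 = p.2 * (1 - p.1 + l * p.1) := by linear_combination hc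
      have h3 : 1 - p.1 + l * p.1 = 0 := by linear_combination -h'
      rw [h3, mul_zero] at h2
      exact hu1 (by linear_combination -h2)
    · -- 1 - l * t ≠ 0
      intro h
      apply hu0
      have key : 1 - l * ((p.1 - 1) / (l * p.1)) = p.1⁻¹ := by
        field_simp
        ring
      rw [key] at h
      simpa using inv_eq_zero.mp h
  · -- left inverse
    intro t ht
    simp only [Finset.mem_filter, Finset.mem_univ, true_and] at ht
    obtain ⟨ht0, ht1, hlt⟩ := ht
    show ((1 - l * t)⁻¹ - 1) / (l * (1 - l * t)⁻¹) = t
    rw [div_eq_iff (mul_ne_zero hl0 (inv_ne_zero hlt))]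
    field_simp
    ring
  · -- right inverse
    intro p hp
    simp only [Finset.mem_filter, Finset.mem_univ, true_and] at hp
    obtain ⟨⟨hc, hu0⟩, hv0⟩ := hp
    have hu1 : p.1 ≠ 1 := by
      intro h1
      apply hv0
      rw [h1] at hc
      have h2 : l * 1 * p.2 = 0 := by linear_combination -hc
      rcases mul_eq_zero.mp h2 with h | h
      · exact absurd (by simpa using h) hl0
      · exact h
    have hlp : l * p.1 ≠ 0 := mul_ne_zero hl0 hu0
    have h2 : 1 - p.1 = p.2 * (1 - p.1 + l * p.1) := by linear_combination hc
    have hden : p.1 - 1 - l * p.1 ≠ 0 := by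
      intro h
      have h1 : 1 - p.1 + l * p.1 = 0 := by linear_combination -h
      rw [h1, mul_zero] at h2
      exact hu1 (by linear_combination -h2)
    have key : 1 - l * ((p.1 - 1) / (l * p.1)) = p.1⁻¹ := by
      field_simp
      ring
    ext
    · show ((1 : κ) - l * ((p.1 - 1) / (l * p.1)))⁻¹ = p.1
      rw [key, inv_inv]
    · show ((p.1 - 1) / (l * p.1)) / ((p.1 - 1) / (l * p.1) - 1) = p.2
      have hsub : (p.1 - 1) / (l * p.1) - 1 = (p.1 - 1 - l * p.1) / (l * p.1) := by
        field_simp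
      have hne : (p.1 - 1) / (l * p.1) - 1 ≠ 0 := by
        rw [hsub]; exact div_ne_zero hden hlp
      rw [div_eq_iff hne, hsub]
      field_simp
      linear_combination (-1 : κ) * h2
  · -- values match
    intro t ht
    simp only [Finset.mem_filter, Finset.mem_univ, true_and] at ht
    obtain ⟨ht0, ht1, hlt⟩ := ht
    have ht1' : t - 1 ≠ 0 := sub_ne_zero.mpr ht1
    have h1t : (1 : κ) - t ≠ 0 := by
      intro h
      exact ht1 (by linear_combination -h)
    show α⁻¹ (1 - l * t) * β t * β⁻¹ (1 - t) =
      β (-1) * (α (1 - l * t)⁻¹ * β (t / (t - 1)))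
    rw [MulChar.inv_apply', MulChar.inv_apply', div_eq_mul_inv, map_mul,
      mulchar_inv_val β ht1', mulchar_inv_val β h1t,
      show t - 1 = -1 * (1 - t) by ring, map_mul]
    have hb1 : β (1 - t) ≠ 0 := mulchar_ne_zero β h1t
    have hbm1 : β (-1 : κ) ≠ 0 := mulchar_ne_zero β (by norm_num)
    field_simp
end

section
/- Let κ be a finite field with q elements, N a positive integer dividing q−1, and κ̄ an algebraic closure of κ. Fix a group isomorphism ι from the group μ_N(ℂ) of complex N-th roots of unity to μ_N(κ) = { x ∈ κˣ : x^N = 1 }, and define φ : κ → ℂ by φ(0) = 0 and φ(x) = ι⁻¹(x^{(q−1)/N}) for x ∈ κˣ. Then for all integers a, b with 1 ≤ a, b ≤ N−1 and every λ ∈ κ with λ ≠ 0 and λ ≠ 1: (1/N²) ∑_{ζ₁,ζ₂ ∈ μ_N(ℂ)} ζ₁^a ζ₂^b · #{ (x,y) ∈ κ̄² : (1−x^N)(1−y^N) = λ x^N y^N, x^q = ι(ζ₁)·x, y^q = ι(ζ₂)·y } = ∑_{(u,v)∈κ², (1−u)(1−v)=λuv} φ(u)^a φ(v)^b, where each set counted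 is finite. (This is the twisted point-counting identity established in the proof of Theorem 3.2 of the paper, identifying the χ^{a,b}-eigencomponent of the Frobenius-twisted point count of the hypergeometric curve with a finite-field hypergeometric value.) -/
namespace adelicHGF

open Polynomial Finset

/-- The set of points `(x,y)` of the hypergeometric curve
`(1−x^N)(1−y^N) = λ x^N y^N` over the algebraic closure `K` of `κ` on which the `q`-power
Frobenius acts as multiplication by the pair of constants `(c₁, c₂) ∈ κ²`. -/
def frobTwistedPoints (κ K : Type*) [Field κ] [Field K] [Algebra κ K]
    (N q : ℕ) (l c₁ c₂ : κ) : Set (K × K) :=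
  {p : K × K |
    (1 - p.1 ^ N) * (1 - p.2 ^ N) = algebraMap κ K l * p.1 ^ N * p.2 ^ N ∧
    p.1 ^ q = algebraMap κ K c₁ * p.1 ∧
    p.2 ^ q = algebraMap κ K c₂ * p.2}

noncomputable instance instFintypeRootsOfUnityComplex (N : ℕ) [NeZero N] :
    Fintype (rootsOfUnity N ℂ) :=
  Fintype.ofFinite _

private lemma frob_fixed {κ K : Type*} [Field κ] [Fintype κ] [Field K] [Algebra κ K]
    (q : ℕ) (hq : q = Fintype.card κ) (z : K) (hz : z ^ q = z) :
    ∃ u : κ, algebraMap κ K u = z := by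
  classical
  have hq2 : 1 < q := hq ▸ Fintype.one_lt_card
  set Q : K[X] := X ^ q - X with hQdef
  have hQ : Q ≠ 0 := FiniteField.X_pow_card_sub_X_ne_zero K hq2
  set T := Q.roots.toFinset with hT
  have hzT : z ∈ T := by
    rw [hT, Multiset.mem_toFinset, mem_roots hQ]
    simp [hQdef, IsRoot, hz]
  set img : Finset K := Finset.univ.image (fun u : κ => algebraMap κ K u) with himg
  have hinj := (algebraMap κ K).injective
  have hsub : img ⊆ T := by
    intro x hx
    simp only [himg, mem_image] at hx
    obtain ⟨u, -, rfl⟩ := hx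
    rw [hT, Multiset.mem_toFinset, mem_roots hQ]
    have hu : u ^ q = u := by rw [hq]; exact FiniteField.pow_card u
    simp [hQdef, IsRoot, ← map_pow, hu]
  have hcardT : T.card ≤ q := by
    calc T.card ≤ Multiset.card Q.roots := Q.roots.toFinset_card_le
    _ ≤ Q.natDegree := Polynomial.card_roots' Q
    _ = q := FiniteField.X_pow_card_sub_X_natDegree_eq K hq2
  have hcardimg : img.card = q := by
    rw [himg, Finset.card_image_of_injective _ hinj, Finset.card_univ, hq]
  have heq : img = T := Finset.eq_of_subset_of_card_le hsub (by rw [hcardimg]; exact hcardT)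
  rw [← heq] at hzT
  simp only [himg, mem_image] at hzT
  obtain ⟨u, -, hu⟩ := hzT
  exact ⟨u, hu⟩

private lemma card_frobTwisted {κ K : Type*} [Field κ] [Fintype κ] [DecidableEq κ]
    [Field K] [Algebra κ K] [IsAlgClosed K]
    (N q m : ℕ) (hNpos : 0 < N) (hqm : q = N * m + 1) (hq : q = Fintype.card κ)
    (ζK : K) (hζK : IsPrimitiveRoot ζK N)
    (l c₁ c₂ : κ) (hc₁ : c₁ ^ N = 1) (hc₂ : c₂ ^ N = 1) :
    Nat.card (frobTwistedPoints κ K N q l c₁ c₂) =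
      N ^ 2 * ((univ.filter (fun p : κ × κ => p.1 ≠ 0 ∧ p.2 ≠ 0 ∧
          (1 - p.1) * (1 - p.2) = l * p.1 * p.2 ∧ p.1 ^ m = c₁ ∧ p.2 ^ m = c₂)).card)
        + (if c₁ = 1 then N else 0) + (if c₂ = 1 then N else 0) := by
  classical
  have hinj := (algebraMap κ K).injective
  have hqpos : 0 < q := by omega
  -- root finsets
  set R : κ → Finset K := fun c => (nthRoots N (algebraMap κ K c)).toFinset with hR
  have hmemR : ∀ (c : κ) (x : K), x ∈ R c ↔ x ^ N = algebraMap κ K c := by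
    intro c x; rw [hR]; dsimp only; rw [Multiset.mem_toFinset, mem_nthRoots hNpos]
  have hRcard : ∀ c : κ, c ≠ 0 → (R c).card = N := by
    intro c hc
    have hfc : algebraMap κ K c ≠ 0 := by simpa using hc
    rw [hR]; dsimp only
    rw [Multiset.toFinset_card_of_nodup (hζK.nthRoots_nodup hfc), hζK.card_nthRoots,
      if_pos (IsAlgClosed.exists_pow_nat_eq (algebraMap κ K c) hNpos)]
  have hRne : ∀ (c : κ) (x : K), c ≠ 0 → x ∈ R c → x ≠ 0 := by
    intro c x hc hx
    rw [hmemR] at hx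
    have hfc : algebraMap κ K c ≠ 0 := by simpa using hc
    intro h0
    rw [h0, zero_pow hNpos.ne'] at hx
    exact hfc hx.symm
  -- generic fact : x^N = algebraMap u implies x^q = algebraMap (u^m) * x
  have hpowq : ∀ (u : κ) (x : K), x ^ N = algebraMap κ K u →
      x ^ q = algebraMap κ K (u ^ m) * x := by
    intro u x hx
    rw [hqm, pow_succ, pow_mul, hx, map_pow]
  set Dfil : Finset (κ × κ) := univ.filter (fun p : κ × κ => p.1 ≠ 0 ∧ p.2 ≠ 0 ∧
      (1 - p.1) * (1 - p.2) = l * p.1 * p.2 ∧ p.1 ^ m = c₁ ∧ p.2 ^ m = c₂) with hDfil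
  set G : Finset (K × K) :=
      (Dfil.biUnion (fun p => R p.1 ×ˢ R p.2)
        ∪ (if c₁ = 1 then R 1 ×ˢ ({(0 : K)} : Finset K) else ∅))
        ∪ (if c₂ = 1 then ({(0 : K)} : Finset K) ×ˢ R 1 else ∅) with hG
  -- G coincides with the twisted point set
  have hGset : (G : Set (K × K)) = frobTwistedPoints κ K N q l c₁ c₂ := by
    ext ⟨x, y⟩
    simp only [hG, Finset.coe_union, Set.mem_union, Finset.mem_coe, Finset.mem_biUnion,
      frobTwistedPoints, Set.mem_setOf_eq]
    constructor
    · rintro ((⟨p, hp, hxy⟩ | hcor1) | hcor2)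
      · rw [Finset.mem_product] at hxy
        obtain ⟨hxu, hyv⟩ := hxy
        rw [hDfil, mem_filter] at hp
        obtain ⟨-, hu0, hv0, hcurve, hum, hvm⟩ := hp
        rw [hmemR] at hxu hyv
        refine ⟨?_, ?_, ?_⟩
        · rw [hxu, hyv]
          have := congrArg (algebraMap κ K) hcurve
          simpa only [map_mul, map_sub, map_one] using this
        · rw [hpowq p.1 x hxu, hum]
        · rw [hpowq p.2 y hyv, hvm]
      · rw [apply_ite (fun s => (x, y) ∈ s)] at hcor1
        by_cases h1 : c₁ = 1
        · rw [if_pos h1] at hcor1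
          rw [Finset.mem_product, Finset.mem_singleton] at hcor1
          obtain ⟨hx1, rfl⟩ := hcor1
          rw [hmemR, map_one] at hx1
          refine ⟨?_, ?_, ?_⟩
          · rw [hx1, zero_pow hNpos.ne']; ring
          · rw [hpowq 1 x (by rw [hx1, map_one]), one_pow, h1]
          · rw [zero_pow hqpos.ne', mul_zero]
        · rw [if_neg h1] at hcor1; exact absurd hcor1 (Finset.notMem_empty _)
      · rw [apply_ite (fun s => (x, y) ∈ s)] at hcor2
        by_cases h2 : c₂ = 1
        · rw [if_pos h2] at hcor2
          rw [Finset.mem_product, Finset.mem_singleton] at hcor2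
          obtain ⟨rfl, hy1⟩ := hcor2
          rw [hmemR, map_one] at hy1
          refine ⟨?_, ?_, ?_⟩
          · rw [hy1, zero_pow hNpos.ne']; ring
          · rw [zero_pow hqpos.ne', mul_zero]
          · rw [hpowq 1 y (by rw [hy1, map_one]), one_pow, h2]
        · rw [if_neg h2] at hcor2; exact absurd hcor2 (Finset.notMem_empty _)
    · rintro ⟨hcurve, hx, hy⟩
      by_cases hx0 : x = 0
      · -- corner 2 : x = 0, need c₂ = 1 and y^N = 1
        subst hx0
        rw [zero_pow hNpos.ne', sub_zero, one_mul, mul_zero, zero_mul] at hcurve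
        have hyN : y ^ N = 1 := (sub_eq_zero.mp hcurve).symm
        have hy0 : y ≠ 0 := by
          intro h0
          rw [h0, zero_pow hNpos.ne'] at hyN
          exact zero_ne_one hyN
        have hyq : y ^ q = y := by
          rw [hpowq 1 y (by rw [hyN, map_one]), one_pow, map_one, one_mul]
        have hc2 : c₂ = 1 := by
          apply hinj
          rw [map_one]
          exact mul_right_cancel₀ hy0 (by rw [← hy, hyq, one_mul])
        right
        rw [if_pos hc2, Finset.mem_product, Finset.mem_singleton]
        exact ⟨rfl, (hmemR 1 y).mpr (by rw [map_one]; exact hyN)⟩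
      · by_cases hy0 : y = 0
        · subst hy0
          rw [zero_pow hNpos.ne', sub_zero, mul_one, mul_zero] at hcurve
          have hxN : x ^ N = 1 := (sub_eq_zero.mp hcurve).symm
          have hxq : x ^ q = x := by
            rw [hpowq 1 x (by rw [hxN, map_one]), one_pow, map_one, one_mul]
          have hc1 : c₁ = 1 := by
            apply hinj
            rw [map_one]
            exact mul_right_cancel₀ hx0 (by rw [← hx, hxq, one_mul])
          left; right
          rw [if_pos hc1, Finset.mem_product, Finset.mem_singleton]
          exact ⟨(hmemR 1 x).mpr (by rw [map_one]; exact hxN), rfl⟩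
        · -- main component
          have hxNfix : (x ^ N) ^ q = x ^ N := by
            rw [pow_right_comm, hx, mul_pow, ← map_pow, hc₁, map_one, one_mul]
          have hyNfix : (y ^ N) ^ q = y ^ N := by
            rw [pow_right_comm, hy, mul_pow, ← map_pow, hc₂, map_one, one_mul]
          obtain ⟨u, hu⟩ := frob_fixed q hq _ hxNfix
          obtain ⟨v, hv⟩ := frob_fixed q hq _ hyNfix
          have hu0 : u ≠ 0 := by
            rintro rfl
            rw [map_zero] at hu
            exact hx0 (pow_eq_zero_iff hNpos.ne' |>.mp hu.symm)
          have hv0 : v ≠ 0 := by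
            rintro rfl
            rw [map_zero] at hv
            exact hy0 (pow_eq_zero_iff hNpos.ne' |>.mp hv.symm)
          have hum : u ^ m = c₁ := by
            apply hinj
            have hxq : x ^ q = algebraMap κ K (u ^ m) * x := hpowq u x hu.symm
            rw [hx] at hxq
            exact (mul_right_cancel₀ hx0 hxq).symm
          have hvm : v ^ m = c₂ := by
            apply hinj
            have hyq : y ^ q = algebraMap κ K (v ^ m) * y := hpowq v y hv.symm
            rw [hy] at hyq
            exact (mul_right_cancel₀ hy0 hyq).symm
          have hcurveκ : (1 - u) * (1 - v) = l * u * v := by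
            apply hinj
            rw [map_mul, map_mul, map_sub, map_sub, map_one, map_mul, hu, hv, hcurve]
          left; left
          refine ⟨(u, v), ?_, ?_⟩
          · rw [hDfil, mem_filter]
            exact ⟨mem_univ _, hu0, hv0, hcurveκ, hum, hvm⟩
          · rw [Finset.mem_product]
            exact ⟨(hmemR u x).mpr hu.symm, (hmemR v y).mpr hv.symm⟩
  -- now compute the cardinality of G
  have hmain_card : (Dfil.biUnion (fun p => R p.1 ×ˢ R p.2)).card = N ^ 2 * Dfil.card := by
    rw [Finset.card_biUnion]
    · rw [Finset.sum_congr rfl (fun p hp => ?_), Finset.sum_const, smul_eq_mul, mul_comm]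
      rw [hDfil, mem_filter] at hp
      rw [Finset.card_product, hRcard p.1 hp.2.1, hRcard p.2 hp.2.2.1, sq]
    · intro p hp p' hp' hne
      rw [Function.onFun_apply, Finset.disjoint_left]
      rintro ⟨x, y⟩ hxy hxy'
      rw [Finset.mem_product] at hxy hxy'
      apply hne
      have h1 : p.1 = p'.1 := hinj (((hmemR _ _).mp hxy.1).symm.trans ((hmemR _ _).mp hxy'.1))
      have h2 : p.2 = p'.2 := hinj (((hmemR _ _).mp hxy.2).symm.trans ((hmemR _ _).mp hxy'.2))
      exact Prod.ext h1 h2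
  have hcor1_card : (if c₁ = 1 then R 1 ×ˢ ({(0 : K)} : Finset K) else ∅).card
      = (if c₁ = 1 then N else 0) := by
    split_ifs
    · rw [Finset.card_product, hRcard 1 one_ne_zero, Finset.card_singleton, mul_one]
    · exact Finset.card_empty
  have hcor2_card : (if c₂ = 1 then ({(0 : K)} : Finset K) ×ˢ R 1 else ∅).card
      = (if c₂ = 1 then N else 0) := by
    split_ifs
    · rw [Finset.card_product, hRcard 1 one_ne_zero, Finset.card_singleton, one_mul]
    · exact Finset.card_empty
  have hdisj1 : Disjoint (Dfil.biUnion (fun p => R p.1 ×ˢ R p.2))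
      (if c₁ = 1 then R 1 ×ˢ ({(0 : K)} : Finset K) else ∅) := by
    rw [Finset.disjoint_left]
    intro z hzL hzR
    rw [Finset.mem_biUnion] at hzL
    obtain ⟨p, hp, hmem⟩ := hzL
    rw [Finset.mem_product] at hmem
    rw [hDfil, mem_filter] at hp
    have hy0 : z.2 ≠ 0 := hRne p.2 z.2 hp.2.2.1 hmem.2
    by_cases h1 : c₁ = 1
    · rw [if_pos h1, Finset.mem_product, Finset.mem_singleton] at hzR
      exact hy0 hzR.2
    · rw [if_neg h1] at hzR
      exact absurd hzR (Finset.notMem_empty _)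
  have hdisj2 : Disjoint ((Dfil.biUnion (fun p => R p.1 ×ˢ R p.2))
        ∪ (if c₁ = 1 then R 1 ×ˢ ({(0 : K)} : Finset K) else ∅))
      (if c₂ = 1 then ({(0 : K)} : Finset K) ×ˢ R 1 else ∅) := by
    rw [Finset.disjoint_left]
    intro z hzL hzR
    have hz1 : z.1 ≠ 0 := by
      rw [Finset.mem_union] at hzL
      rcases hzL with hz | hz
      · rw [Finset.mem_biUnion] at hz
        obtain ⟨p, hp, hmem⟩ := hz
        rw [Finset.mem_product] at hmem
        rw [hDfil, mem_filter] at hp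
        exact hRne p.1 z.1 hp.2.1 hmem.1
      · by_cases h1 : c₁ = 1
        · rw [if_pos h1, Finset.mem_product] at hz
          exact hRne 1 z.1 one_ne_zero hz.1
        · rw [if_neg h1] at hz
          exact absurd hz (Finset.notMem_empty _)
    by_cases h2 : c₂ = 1
    · rw [if_pos h2, Finset.mem_product, Finset.mem_singleton] at hzR
      exact hz1 hzR.1
    · rw [if_neg h2] at hzR
      exact absurd hzR (Finset.notMem_empty _)
  have hGcard : G.card = N ^ 2 * Dfil.card + (if c₁ = 1 then N else 0)
      + (if c₂ = 1 then N else 0) := by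
    rw [hG, Finset.card_union_of_disjoint hdisj2, Finset.card_union_of_disjoint hdisj1,
      hmain_card, hcor1_card, hcor2_card]
  rw [← hGset, Nat.card_coe_set_eq, Set.ncard_coe_finset, hGcard, hDfil]

private lemma sum_rootsOfUnity_pow (N a : ℕ) [NeZero N] (ha1 : 0 < a) (ha2 : a < N) :
    ∑ ζ : rootsOfUnity N ℂ, ((ζ : ℂˣ) : ℂ) ^ a = 0 := by
  classical
  have hN : N ≠ 0 := NeZero.ne N
  let f : rootsOfUnity N ℂ →* ℂ :=
    (Units.coeHom ℂ).comp ((powMonoidHom a).comp (Subgroup.subtype _))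
  have hf : f ≠ 1 := by
    obtain ⟨u, hu⟩ := (Complex.isPrimitiveRoot_exp N hN).isUnit hN
    have hprim : IsPrimitiveRoot u N := by
      rw [← IsPrimitiveRoot.coe_units_iff, hu]
      exact Complex.isPrimitiveRoot_exp N hN
    have hmem : u ∈ rootsOfUnity N ℂ := by
      rw [mem_rootsOfUnity]; exact hprim.pow_eq_one
    intro h
    have h2 := DFunLike.congr_fun h ⟨u, hmem⟩
    simp only [f, MonoidHom.comp_apply, MonoidHom.coe_coe, Subgroup.coe_subtype,
      powMonoidHom_apply, Units.coeHom_apply, MonoidHom.one_apply, Units.val_pow_eq_pow_val] at h2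
    exact hprim.pow_ne_one_of_pos_of_lt ha1.ne' ha2 (Units.ext h2)
  have h0 := sum_hom_units_eq_zero f hf
  simpa [f] using h0

private lemma pow_q_finite {K : Type*} [Field K] (q : ℕ) (hq2 : 1 < q) (c : K) :
    {x : K | x ^ q = c * x}.Finite := by
  classical
  have hpne : (X ^ q - C c * X : K[X]) ≠ 0 := by
    intro h
    have h2 := congrArg (fun P : K[X] => P.coeff q) h
    simp only [coeff_sub, coeff_X_pow, if_pos rfl, coeff_C_mul, coeff_X, coeff_zero] at h2
    rw [if_neg (by omega : ¬ (1 = q))] at h2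
    simp at h2
  refine Set.Finite.subset (Polynomial.finite_setOf_isRoot hpne) ?_
  intro x hx
  simp only [Set.mem_setOf_eq] at hx ⊢
  simp [IsRoot, hx]

/-- **Twisted point-counting identity in the proof of Theorem 3.2**: let `κ` be a finite
field with `q` elements, `N ∣ q − 1`, `κ̄ = K` an algebraic closure of `κ`, `ι` a group
isomorphism `μ_N(ℂ) ≃ μ_N(κ)`, and `φ : κ → ℂ` the character with `φ(0) = 0` and
`φ(x) = ι⁻¹(x^{(q−1)/N})` for `x ≠ 0`.  Then for `1 ≤ a, b ≤ N − 1` and `λ ∈ κ`, `λ ≠ 0, 1`,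
each set of Frobenius-twisted points of the hypergeometric curve is finite, and
`(1/N²) ∑_{ζ₁,ζ₂∈μ_N(ℂ)} ζ₁^a ζ₂^b · #{(x,y) ∈ κ̄² : (1−x^N)(1−y^N) = λx^Ny^N, x^q = ι(ζ₁)x,
y^q = ι(ζ₂)y} = ∑_{(u,v)∈κ², (1−u)(1−v)=λuv} φ(u)^a φ(v)^b`. -/
theorem twisted_point_count {κ K : Type*} [Field κ] [Fintype κ] [DecidableEq κ]
    [Field K] [Algebra κ K] [IsAlgClosure κ K]
    (N q : ℕ) [NeZero N] (hq : q = Fintype.card κ) (hNq : N ∣ q - 1)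
    (ι : rootsOfUnity N ℂ ≃* rootsOfUnity N κ)
    (φ : κ → ℂ) (hφ0 : φ 0 = 0)
    (hφ : ∀ x : κˣ, ∃ ζ : rootsOfUnity N ℂ,
      φ (x : κ) = ((ζ : ℂˣ) : ℂ) ∧ ((ι ζ : κˣ) : κ) = (x : κ) ^ ((q - 1) / N))
    (a b : ℕ) (ha1 : 1 ≤ a) (ha2 : a ≤ N - 1) (hb1 : 1 ≤ b) (hb2 : b ≤ N - 1)
    (l : κ) (hl0 : l ≠ 0) (hl1 : l ≠ 1) :
    (∀ ζ₁ ζ₂ : rootsOfUnity N ℂ,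
      (frobTwistedPoints κ K N q l ((ι ζ₁ : κˣ) : κ) ((ι ζ₂ : κˣ) : κ)).Finite) ∧
    (1 / (N : ℂ) ^ 2) *
        ∑ ζ₁ : rootsOfUnity N ℂ, ∑ ζ₂ : rootsOfUnity N ℂ,
          ((ζ₁ : ℂˣ) : ℂ) ^ a * ((ζ₂ : ℂˣ) : ℂ) ^ b *
            (Nat.card (frobTwistedPoints κ K N q l ((ι ζ₁ : κˣ) : κ) ((ι ζ₂ : κˣ) : κ)) : ℂ)
      = ∑ p ∈ Finset.univ.filter
            (fun p : κ × κ => (1 - p.1) * (1 - p.2) = l * p.1 * p.2),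
          φ p.1 ^ a * φ p.2 ^ b := by
  classical
  have hNpos : 0 < N := NeZero.pos N
  have hq2 : 1 < q := hq ▸ Fintype.one_lt_card
  obtain ⟨m, hm⟩ := hNq
  have hqm : q = N * m + 1 := by omega
  have hmdef : (q - 1) / N = m := by rw [hm, Nat.mul_div_cancel_left _ hNpos]
  have hinj := (algebraMap κ K).injective
  -- `N` is invertible in `κ` and `K`
  have hNκ : (N : κ) ≠ 0 := by
    intro h
    have hp : (ringChar κ).Prime := CharP.char_is_prime κ (ringChar κ)
    have hdvdN : ringChar κ ∣ N := (CharP.cast_eq_zero_iff κ (ringChar κ) N).mp h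
    obtain ⟨n, hpr, hcard⟩ := FiniteField.card κ (ringChar κ)
    have hdvdq : ringChar κ ∣ q := by
      rw [hq, hcard]
      exact dvd_pow_self _ (by exact_mod_cast n.pos.ne')
    have hdvdq1 : ringChar κ ∣ q - 1 := hm ▸ hdvdN.mul_right m
    have h1 : ringChar κ ∣ 1 := by
      have h2 := Nat.dvd_sub hdvdq hdvdq1
      rwa [(by omega : q - (q - 1) = 1)] at h2
    exact hp.one_lt.ne' (Nat.dvd_one.mp h1)
  have hNK : (N : K) ≠ 0 := by
    intro h
    apply hNκ
    apply hinj
    rw [map_natCast, h, map_zero]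
  haveI : NeZero ((N : K)) := ⟨hNK⟩
  haveI : IsAlgClosed K := IsAlgClosure.isAlgClosed κ
  obtain ⟨ζK, hζK⟩ := HasEnoughRootsOfUnity.exists_primitiveRoot K N
  -- values of ι are N-th roots of unity in κ
  have hcN : ∀ ζ : rootsOfUnity N ℂ, ((ι ζ : κˣ) : κ) ^ N = 1 := by
    intro ζ
    have h : ((ι ζ : κˣ)) ^ N = 1 := (mem_rootsOfUnity N _).mp (ι ζ).2
    rw [← Units.val_pow_eq_pow_val, h, Units.val_one]
  have hιinj : ∀ ζ ζ' : rootsOfUnity N ℂ, ((ι ζ : κˣ) : κ) = ((ι ζ' : κˣ) : κ) → ζ = ζ' :=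
    fun ζ ζ' h => ι.injective (Subtype.ext (Units.ext h))
  have hc1 : ∀ ζ : rootsOfUnity N ℂ, (((ι ζ : κˣ) : κ) = 1) ↔ ζ = 1 := by
    intro ζ
    constructor
    · intro h
      apply hιinj
      rw [h]
      simp
    · rintro rfl
      simp
  -- finiteness
  have hfin : ∀ c₁ c₂ : κ, (frobTwistedPoints κ K N q l c₁ c₂).Finite := by
    intro c₁ c₂
    have h1 : ∀ c : κ, {x : K | x ^ q = algebraMap κ K c * x}.Finite :=
      fun c => pow_q_finite q hq2 _
    exact ((h1 c₁).prod (h1 c₂)).subset (fun p hp => Set.mem_prod.mpr ⟨hp.2.1, hp.2.2⟩)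
  refine ⟨fun ζ₁ ζ₂ => hfin _ _, ?_⟩
  -- vanishing character sums
  have hsa : ∑ ζ : rootsOfUnity N ℂ, ((ζ : ℂˣ) : ℂ) ^ a = 0 :=
    sum_rootsOfUnity_pow N a ha1 (by omega)
  have hsb : ∑ ζ : rootsOfUnity N ℂ, ((ζ : ℂˣ) : ℂ) ^ b = 0 :=
    sum_rootsOfUnity_pow N b hb1 (by omega)
  -- the inner character sum picks out φ
  have hinner : ∀ (u : κ), u ≠ 0 → ∀ (e : ℕ),
      (∑ ζ : rootsOfUnity N ℂ, if u ^ m = ((ι ζ : κˣ) : κ) then ((ζ : ℂˣ) : ℂ) ^ e else 0)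
        = φ u ^ e := by
    intro u hu e
    obtain ⟨ζu, hζu1, hζu2⟩ := hφ (Units.mk0 u hu)
    rw [Units.val_mk0] at hζu1 hζu2
    rw [hmdef] at hζu2
    rw [Finset.sum_eq_single ζu]
    · rw [if_pos hζu2.symm, hζu1]
    · intro ζ _ hne
      rw [if_neg]
      intro h
      exact hne (hιinj ζ ζu (by rw [← h, hζu2]))
    · intro h
      exact absurd (Finset.mem_univ _) h
  set Dset : Finset (κ × κ) := univ.filter (fun p : κ × κ => p.1 ≠ 0 ∧ p.2 ≠ 0 ∧
      (1 - p.1) * (1 - p.2) = l * p.1 * p.2) with hDset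
  -- counting formula, complex-valued
  have hbig : ∀ c₁ c₂ : κ,
      ((univ.filter (fun p : κ × κ => p.1 ≠ 0 ∧ p.2 ≠ 0 ∧
          (1 - p.1) * (1 - p.2) = l * p.1 * p.2 ∧ p.1 ^ m = c₁ ∧ p.2 ^ m = c₂)).card : ℂ)
        = ∑ p ∈ Dset, (if p.1 ^ m = c₁ ∧ p.2 ^ m = c₂ then (1 : ℂ) else 0) := by
    intro c₁ c₂
    have h1 : (univ.filter (fun p : κ × κ => p.1 ≠ 0 ∧ p.2 ≠ 0 ∧
          (1 - p.1) * (1 - p.2) = l * p.1 * p.2 ∧ p.1 ^ m = c₁ ∧ p.2 ^ m = c₂))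
        = Dset.filter (fun p : κ × κ => p.1 ^ m = c₁ ∧ p.2 ^ m = c₂) := by
      rw [hDset, Finset.filter_filter]
      apply Finset.filter_congr
      intro p _
      constructor
      · rintro ⟨h1, h2, h3, h4, h5⟩; exact ⟨⟨h1, h2, h3⟩, h4, h5⟩
      · rintro ⟨⟨h1, h2, h3⟩, h4, h5⟩; exact ⟨h1, h2, h3, h4, h5⟩
    rw [h1, ← Finset.sum_boole]
    try push_cast
    try rfl
  have hcardζ : ∀ ζ₁ ζ₂ : rootsOfUnity N ℂ,
      ((Nat.card (frobTwistedPoints κ K N q l ((ι ζ₁ : κˣ) : κ) ((ι ζ₂ : κˣ) : κ))) : ℂ)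
        = (N : ℂ) ^ 2 * (∑ p ∈ Dset, (if p.1 ^ m = ((ι ζ₁ : κˣ) : κ) ∧
              p.2 ^ m = ((ι ζ₂ : κˣ) : κ) then (1 : ℂ) else 0))
          + (if ζ₁ = 1 then (N : ℂ) else 0) + (if ζ₂ = 1 then (N : ℂ) else 0) := by
    intro ζ₁ ζ₂
    rw [card_frobTwisted N q m hNpos hqm hq ζK hζK l _ _ (hcN ζ₁) (hcN ζ₂)]
    push_cast
    rw [hbig]
    simp only [hc1]
    try push_cast
    try ring
  -- main term
  have e1 : (∑ ζ₁ : rootsOfUnity N ℂ, ∑ ζ₂ : rootsOfUnity N ℂ,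
        ((ζ₁ : ℂˣ) : ℂ) ^ a * ((ζ₂ : ℂˣ) : ℂ) ^ b *
          (∑ p ∈ Dset, (if p.1 ^ m = ((ι ζ₁ : κˣ) : κ) ∧
            p.2 ^ m = ((ι ζ₂ : κˣ) : κ) then (1 : ℂ) else 0)))
      = ∑ p ∈ Dset, φ p.1 ^ a * φ p.2 ^ b := by
    calc
      _ = ∑ ζ₁ : rootsOfUnity N ℂ, ∑ ζ₂ : rootsOfUnity N ℂ, ∑ p ∈ Dset,
            ((ζ₁ : ℂˣ) : ℂ) ^ a * ((ζ₂ : ℂˣ) : ℂ) ^ b *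
              (if p.1 ^ m = ((ι ζ₁ : κˣ) : κ) ∧ p.2 ^ m = ((ι ζ₂ : κˣ) : κ)
                then (1 : ℂ) else 0) := by
          simp only [Finset.mul_sum]
      _ = ∑ p ∈ Dset, ∑ ζ₁ : rootsOfUnity N ℂ, ∑ ζ₂ : rootsOfUnity N ℂ,
            ((ζ₁ : ℂˣ) : ℂ) ^ a * ((ζ₂ : ℂˣ) : ℂ) ^ b *
              (if p.1 ^ m = ((ι ζ₁ : κˣ) : κ) ∧ p.2 ^ m = ((ι ζ₂ : κˣ) : κ)
                then (1 : ℂ) else 0) := by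
          rw [Finset.sum_congr rfl (fun ζ₁ _ => Finset.sum_comm), Finset.sum_comm]
      _ = ∑ p ∈ Dset, φ p.1 ^ a * φ p.2 ^ b := by
          apply Finset.sum_congr rfl
          intro p hp
          rw [hDset, mem_filter] at hp
          calc
            _ = (∑ ζ₁ : rootsOfUnity N ℂ,
                  if p.1 ^ m = ((ι ζ₁ : κˣ) : κ) then ((ζ₁ : ℂˣ) : ℂ) ^ a else 0) *
                (∑ ζ₂ : rootsOfUnity N ℂ,
                  if p.2 ^ m = ((ι ζ₂ : κˣ) : κ) then ((ζ₂ : ℂˣ) : ℂ) ^ b else 0) := by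
              rw [Finset.sum_mul_sum]
              apply Finset.sum_congr rfl
              intro ζ₁ _
              apply Finset.sum_congr rfl
              intro ζ₂ _
              by_cases hA : p.1 ^ m = ((ι ζ₁ : κˣ) : κ) <;>
                by_cases hB : p.2 ^ m = ((ι ζ₂ : κˣ) : κ) <;>
                simp [hA, hB]
            _ = φ p.1 ^ a * φ p.2 ^ b := by
              rw [hinner p.1 hp.2.1 a, hinner p.2 hp.2.2.1 b]
  -- corner terms vanish
  have e2 : (∑ ζ₁ : rootsOfUnity N ℂ, ∑ ζ₂ : rootsOfUnity N ℂ,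
        ((ζ₁ : ℂˣ) : ℂ) ^ a * ((ζ₂ : ℂˣ) : ℂ) ^ b * (if ζ₁ = 1 then (N : ℂ) else 0)) = 0 := by
    calc
      _ = ∑ ζ₁ : rootsOfUnity N ℂ, (((ζ₁ : ℂˣ) : ℂ) ^ a * (if ζ₁ = 1 then (N : ℂ) else 0)) *
            ∑ ζ₂ : rootsOfUnity N ℂ, ((ζ₂ : ℂˣ) : ℂ) ^ b := by
          apply Finset.sum_congr rfl
          intro ζ₁ _
          rw [Finset.mul_sum]
          apply Finset.sum_congr rfl
          intro ζ₂ _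
          ring
      _ = 0 := by
          rw [hsb]
          simp
  have e3 : (∑ ζ₁ : rootsOfUnity N ℂ, ∑ ζ₂ : rootsOfUnity N ℂ,
        ((ζ₁ : ℂˣ) : ℂ) ^ a * ((ζ₂ : ℂˣ) : ℂ) ^ b * (if ζ₂ = 1 then (N : ℂ) else 0)) = 0 := by
    calc
      _ = ∑ ζ₁ : rootsOfUnity N ℂ, ((ζ₁ : ℂˣ) : ℂ) ^ a *
            ∑ ζ₂ : rootsOfUnity N ℂ, ((ζ₂ : ℂˣ) : ℂ) ^ b * (if ζ₂ = 1 then (N : ℂ) else 0) := by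
          apply Finset.sum_congr rfl
          intro ζ₁ _
          rw [Finset.mul_sum]
          apply Finset.sum_congr rfl
          intro ζ₂ _
          ring
      _ = (∑ ζ₁ : rootsOfUnity N ℂ, ((ζ₁ : ℂˣ) : ℂ) ^ a) *
            ∑ ζ₂ : rootsOfUnity N ℂ, ((ζ₂ : ℂˣ) : ℂ) ^ b * (if ζ₂ = 1 then (N : ℂ) else 0) := by
          rw [← Finset.sum_mul]
      _ = 0 := by rw [hsa, zero_mul]
  -- total
  have htotal : (∑ ζ₁ : rootsOfUnity N ℂ, ∑ ζ₂ : rootsOfUnity N ℂ,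
        ((ζ₁ : ℂˣ) : ℂ) ^ a * ((ζ₂ : ℂˣ) : ℂ) ^ b *
          (Nat.card (frobTwistedPoints κ K N q l ((ι ζ₁ : κˣ) : κ) ((ι ζ₂ : κˣ) : κ)) : ℂ))
      = (N : ℂ) ^ 2 * ∑ p ∈ Dset, φ p.1 ^ a * φ p.2 ^ b := by
    calc
      _ = ∑ ζ₁ : rootsOfUnity N ℂ, ∑ ζ₂ : rootsOfUnity N ℂ,
            ((N : ℂ) ^ 2 * (((ζ₁ : ℂˣ) : ℂ) ^ a * ((ζ₂ : ℂˣ) : ℂ) ^ b *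
              (∑ p ∈ Dset, (if p.1 ^ m = ((ι ζ₁ : κˣ) : κ) ∧
                p.2 ^ m = ((ι ζ₂ : κˣ) : κ) then (1 : ℂ) else 0)))
            + ((ζ₁ : ℂˣ) : ℂ) ^ a * ((ζ₂ : ℂˣ) : ℂ) ^ b * (if ζ₁ = 1 then (N : ℂ) else 0)
            + ((ζ₁ : ℂˣ) : ℂ) ^ a * ((ζ₂ : ℂˣ) : ℂ) ^ b * (if ζ₂ = 1 then (N : ℂ) else 0)) := by
          apply Finset.sum_congr rfl
          intro ζ₁ _
          apply Finset.sum_congr rfl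
          intro ζ₂ _
          rw [hcardζ ζ₁ ζ₂]
          ring
      _ = (N : ℂ) ^ 2 * ∑ p ∈ Dset, φ p.1 ^ a * φ p.2 ^ b := by
          simp only [Finset.sum_add_distrib, ← Finset.mul_sum]
          rw [e1, e2, e3, add_zero, add_zero]
  -- pass from Dset to the full curve sum
  have hfinal : (∑ p ∈ Dset, φ p.1 ^ a * φ p.2 ^ b)
      = ∑ p ∈ Finset.univ.filter
          (fun p : κ × κ => (1 - p.1) * (1 - p.2) = l * p.1 * p.2),
        φ p.1 ^ a * φ p.2 ^ b := by
    apply Finset.sum_subset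
    · intro p hp
      rw [hDset, mem_filter] at hp
      rw [mem_filter]
      exact ⟨mem_univ _, hp.2.2.2⟩
    · intro p hp hnp
      rw [mem_filter] at hp
      by_cases h1 : p.1 = 0
      · rw [h1, hφ0, zero_pow (by omega : a ≠ 0), zero_mul]
      · by_cases h2 : p.2 = 0
        · rw [h2, hφ0, zero_pow (by omega : b ≠ 0), mul_zero]
        · exact absurd (by rw [hDset, mem_filter]; exact ⟨mem_univ _, h1, h2, hp.2⟩) hnp
  rw [htotal, ← hfinal, one_div, inv_mul_cancel_left₀
    (pow_ne_zero 2 (Nat.cast_ne_zero.mpr (NeZero.ne N)))]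

end adelicHGF
end
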